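/- arXiv:0706.0624 — 6 statements merged into one kernel-verified Lean document; each statement's English description precedes it below -/
import Mathlib

section
/- Let X be a real normed linear space, A ⊆ X an open convex set, n a natural number, F : A → ℝⁿ a d.c. mapping, and g : ℝⁿ → ℝ a d.c. function. Then the composed function g ∘ F is d.c. on A. -/
open Set Metric Bornology Filter NNReal

/-- `f` is a control function for `F` on the convex set `C`. -/
def IsControlOn {X Y : Type*} [NormedAddCommGroup X] [NormedSpace ℝ X]
    [NormedAddCommGroup Y] [NormedSpace ℝ Y]
    (C : Set X) (F : X → Y) (f : X → ℝ) : Prop :=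
  ContinuousOn f C ∧
    ∀ φ : Y →L[ℝ] ℝ, ‖φ‖ ≤ 1 → ConvexOn ℝ C (fun x => φ (F x) + f x)

/-- `F` is a d.c. (delta-convex) mapping on `C`. -/
def IsDCOn {X Y : Type*} [NormedAddCommGroup X] [NormedSpace ℝ X]
    [NormedAddCommGroup Y] [NormedSpace ℝ Y]
    (C : Set X) (F : X → Y) : Prop :=
  ContinuousOn F C ∧ ∃ f : X → ℝ, IsControlOn C F f

/-- `g` is a d.c. function on `C`: a difference of two continuous convex functions. -/
def IsDCFnOn {X : Type*} [NormedAddCommGroup X] [NormedSpace ℝ X]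
    (C : Set X) (g : X → ℝ) : Prop :=
  ∃ p q : X → ℝ, ContinuousOn p C ∧ ContinuousOn q C ∧
    ConvexOn ℝ C p ∧ ConvexOn ℝ C q ∧ ∀ x ∈ C, g x = p x - q x

/-- `A ⊂⊂ B`: some ε-enlargement of `A` is contained in `B`. -/
def SubSub {X : Type*} [NormedAddCommGroup X] (A B : Set X) : Prop :=
  ∃ ε > (0:ℝ), ∀ a ∈ A, ∀ y : X, ‖y‖ < ε → a + y ∈ B

/-- `N` is an equivalent norm on `Y` with modulus of convexity of power type 2. -/
def IsEquivNormPT2 {Y : Type*} [NormedAddCommGroup Y] [NormedSpace ℝ Y] (N : Y → ℝ) : Prop :=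
  (∀ u v : Y, N (u + v) ≤ N u + N v) ∧
  (∀ (a : ℝ) (u : Y), N (a • u) = |a| * N u) ∧
  (∃ c₁ c₂ : ℝ, 0 < c₁ ∧ 0 < c₂ ∧ ∀ u : Y, c₁ * ‖u‖ ≤ N u ∧ N u ≤ c₂ * ‖u‖) ∧
  (∃ a : ℝ, 0 < a ∧ ∀ ε : ℝ, ε ∈ Set.Ioc (0:ℝ) 2 → ∀ u v : Y,
    N u ≤ 1 → N v ≤ 1 → ε ≤ N (u - v) → a * ε ^ 2 ≤ 1 - N ((2⁻¹ : ℝ) • (u + v)))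

/-- `G` is `C^{1,1}` on `U`: Fréchet differentiable with Lipschitz derivative. -/
def IsC11On {X Y : Type*} [NormedAddCommGroup X] [NormedSpace ℝ X]
    [NormedAddCommGroup Y] [NormedSpace ℝ Y] (U : Set X) (G : X → Y) : Prop :=
  ∃ G' : X → X →L[ℝ] Y, (∀ x ∈ U, HasFDerivAt G (G' x) x) ∧
    ∃ L : NNReal, LipschitzOnWith L G' U

/-- `F` is locally d.c. on `C`: each point of `C` has a convex neighborhood `U`
with `F` d.c. on `U ∩ C`. -/
def LocallyDCOn {X Y : Type*} [NormedAddCommGroup X] [NormedSpace ℝ X]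
    [NormedAddCommGroup Y] [NormedSpace ℝ Y] (C : Set X) (F : X → Y) : Prop :=
  ∀ a ∈ C, ∃ U : Set X, U ∈ nhds a ∧ Convex ℝ U ∧ IsDCOn (U ∩ C) F


lemma affine_convexOn {X : Type*} [NormedAddCommGroup X] [NormedSpace ℝ X]
    {s : Set X} (hs : Convex ℝ s) (φ : X →L[ℝ] ℝ) (b : ℝ) :
    ConvexOn ℝ s (fun x => φ x + b) := by
  refine ⟨hs, fun x _ y _ t1 t2 ht1 ht2 hsum => le_of_eq ?_⟩
  simp only [map_add, map_smul, smul_eq_mul]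
  linear_combination (-b) * hsum

lemma exists_subgradient {X : Type*} [NormedAddCommGroup X] [NormedSpace ℝ X]
    {A : Set X} (hAo : IsOpen A) {f : X → ℝ}
    (hf : ConvexOn ℝ A f) (hfc : ContinuousOn f A) {y : X} (hy : y ∈ A) :
    ∃ φ : X →L[ℝ] ℝ, ∀ z ∈ A, f y + φ (z - y) ≤ f z := by
  set S : Set (X × ℝ) := {q | q.1 ∈ A ∧ f q.1 < q.2} with hS
  have hSopen : IsOpen S := by
    have h1 : ContinuousOn (fun q : X × ℝ => f q.1 - q.2) (A ×ˢ (univ : Set ℝ)) := by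
      refine ContinuousOn.sub ?_ continuous_snd.continuousOn
      exact hfc.comp continuous_fst.continuousOn (fun q hq => hq.1)
    have h2 := h1.isOpen_inter_preimage (hAo.prod isOpen_univ) isOpen_Iio (t := Iio (0:ℝ))
    convert h2 using 1
    ext q
    simp only [hS, mem_setOf_eq, mem_inter_iff, mem_prod, mem_univ, and_true, mem_preimage,
      mem_Iio, sub_neg]
  have hSconv : Convex ℝ S := by
    rintro ⟨x, s⟩ ⟨hx, hxs⟩ ⟨x', s'⟩ ⟨hx', hxs'⟩ t1 t2 ht1 ht2 hsum
    refine ⟨hf.1 hx hx' ht1 ht2 hsum, ?_⟩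
    have h : f (t1 • x + t2 • x') ≤ t1 * f x + t2 * f x' := by
      simpa using hf.2 hx hx' ht1 ht2 hsum
    show f (t1 • x + t2 • x') < t1 * s + t2 * s'
    rcases ht1.eq_or_lt with h1 | h1
    · have ht2' : t2 = 1 := by linarith
      simp only [← h1, ht2', zero_smul, one_smul, zero_add, zero_mul, one_mul] at h ⊢
      linarith
    · have h2 := mul_lt_mul_of_pos_left hxs h1
      have h3 := mul_le_mul_of_nonneg_left hxs'.le ht2
      linarith
  have hyS : ((y, f y) : X × ℝ) ∉ S := by simp [hS]
  obtain ⟨Φ, hΦ⟩ := geometric_hahn_banach_open_point hSconv hSopen hyS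
  set c : ℝ := Φ (0, 1) with hc
  have hclt : c < 0 := by
    have h1 := hΦ (y, f y + 1) ⟨hy, by show f y < f y + 1; linarith⟩
    have h2 : ((y, f y + 1) : X × ℝ) = (y, f y) + (0, 1) := by simp
    rw [h2, map_add] at h1
    linarith
  have hcne : (0:ℝ) < -c := by linarith
  have key : ∀ z ∈ A, Φ (z, 0) + f z * c ≤ Φ (y, 0) + f y * c := by
    intro z hz
    have hyy : Φ (y, f y) = Φ (y, 0) + f y * c := by
      have h0 : ((y, f y) : X × ℝ) = (y, 0) + (f y) • ((0:X), (1:ℝ)) := by simp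
      rw [h0, map_add, map_smul, smul_eq_mul, ← hc]
    refine le_of_forall_pos_le_add ?_
    intro ε' hε'
    have h1 := hΦ (z, f z + ε' / (-c)) ⟨hz, by
      have hd : 0 < ε' / (-c) := div_pos hε' hcne
      show f z < f z + ε' / (-c); linarith⟩
    have h2 : ((z, f z + ε' / (-c)) : X × ℝ) = (z, 0) + (f z + ε' / (-c)) • ((0:X), (1:ℝ)) := by
      simp
    rw [h2, map_add, map_smul, smul_eq_mul, ← hc, hyy] at h1
    have h3 : ε' / (-c) * c = -ε' := by
      rw [div_mul_eq_mul_div, div_neg, mul_div_assoc, div_self hclt.ne, mul_one]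
    nlinarith
  refine ⟨(-c)⁻¹ • (Φ.comp (ContinuousLinearMap.inl ℝ X ℝ)), fun z hz => ?_⟩
  have h := key z hz
  simp only [ContinuousLinearMap.smul_apply, ContinuousLinearMap.comp_apply,
    ContinuousLinearMap.inl_apply, smul_eq_mul, map_sub]
  have h5 : (-c)⁻¹ * Φ (z, 0) - (-c)⁻¹ * Φ (y, 0) = (Φ (z, 0) - Φ (y, 0)) / (-c) := by
    ring
  have h6 : (Φ (z, 0) - Φ (y, 0)) / (-c) ≤ f z - f y := by
    rw [div_le_iff₀ hcne]
    nlinarith [h]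
  rw [h5]
  linarith

lemma chain_up {u : ℕ → ℝ} : ∀ m : ℕ, (∀ j, j + 1 ≤ m → u j ≤ u (j+1)) →
    ∀ k, k ≤ m → u k ≤ u m := by
  intro m
  induction m with
  | zero => intro _ k hk; simp [Nat.le_zero.mp hk]
  | succ m ih =>
    intro h k hk
    rcases Nat.lt_succ_iff_lt_or_eq.mp (Nat.lt_succ_of_le hk) with h' | h'
    · exact (ih (fun j hj => h j (hj.trans (Nat.le_succ m))) k (Nat.lt_succ_iff.mp h')).trans
        (h m (le_refl _))
    · subst h'; exact le_refl _
lemma chain_down {u : ℕ → ℝ} (m : ℕ) (h : ∀ j, m ≤ j → u (j+1) ≤ u j) :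
    ∀ k, m ≤ k → u k ≤ u m := by
  intro k hk
  induction k, hk using Nat.le_induction with
  | base => exact le_refl _
  | succ k hk ih => exact (h k hk).trans ih

set_option maxHeartbeats 1000000 in
lemma comp_convex_aux {X : Type*} [NormedAddCommGroup X] [NormedSpace ℝ X]
    {A : Set X} (hAo : IsOpen A) (hAc : Convex ℝ A) {n : ℕ}
    {F : X → EuclideanSpace ℝ (Fin n)} (hFc : ContinuousOn F A)
    {f : X → ℝ} (hctl : IsControlOn A F f) (hf0 : ∀ x ∈ A, 0 ≤ f x)
    {p : EuclideanSpace ℝ (Fin n) → ℝ} (hp : ConvexOn ℝ Set.univ p) (hpc : Continuous p) :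
    ∃ ψ : X → ℝ, ContinuousOn ψ A ∧ ConvexOn ℝ A ψ ∧
      ConvexOn ℝ A (fun x => p (F x) + ψ x) := by
  classical
  have hfc : ContinuousOn f A := hctl.1
  have hfcv : ConvexOn ℝ A f := by
    have := hctl.2 0 (by simp)
    simpa using this
  -- scaled control
  have hscaled : ∀ φ : EuclideanSpace ℝ (Fin n) →L[ℝ] ℝ,
      ConvexOn ℝ A (fun x => φ (F x) + ‖φ‖ * f x) := by
    intro φ
    by_cases h0 : φ = 0
    · subst h0
      simpa using convexOn_const (0:ℝ) hAc
    · have hn : 0 < ‖φ‖ := norm_pos_iff.mpr h0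
      have h1 : ConvexOn ℝ A (fun x => (‖φ‖⁻¹ • φ) (F x) + f x) := by
        refine hctl.2 _ ?_
        refine le_trans (ContinuousLinearMap.opNorm_smul_le _ _) (le_of_eq ?_)
        rw [Real.norm_eq_abs, abs_of_nonneg (by positivity), inv_mul_cancel₀ hn.ne']
      have h2 := h1.smul (le_of_lt hn)
      have e : (fun x => φ (F x) + ‖φ‖ * f x) = (fun x => ‖φ‖ • ((‖φ‖⁻¹ • φ) (F x) + f x)) := by
        funext x
        simp only [ContinuousLinearMap.smul_apply, smul_eq_mul]
        field_simp
      rw [e]; exact h2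
  -- the function r = ‖F ·‖ + f
  set r : X → ℝ := fun x => ‖F x‖ + f x with hrdef
  have hrc : ContinuousOn r A := (hFc.norm).add hfc
  have hr0 : ∀ x ∈ A, 0 ≤ r x := fun x hx => add_nonneg (norm_nonneg _) (hf0 x hx)
  have hfler : ∀ x, f x ≤ r x := fun x => by
    simp only [hrdef]; nlinarith [norm_nonneg (F x)]
  have hrcv : ConvexOn ℝ A r := by
    refine ⟨hAc, ?_⟩
    intro x hx y hy t1 t2 ht1 ht2 hsum
    simp only [smul_eq_mul, hrdef]
    have hfcc : f (t1 • x + t2 • y) ≤ t1 * f x + t2 * f y := by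
      simpa using hfcv.2 hx hy ht1 ht2 hsum
    by_cases hz : F (t1 • x + t2 • y) = 0
    · rw [hz, norm_zero]
      nlinarith [norm_nonneg (F x), norm_nonneg (F y)]
    · obtain ⟨φ, hφn, hφx⟩ := exists_dual_vector ℝ (F (t1 • x + t2 • y)) (norm_ne_zero_iff.mpr hz)
      have h1 : φ (F (t1 • x + t2 • y)) + ‖φ‖ * f (t1 • x + t2 • y) ≤
          t1 * (φ (F x) + ‖φ‖ * f x) + t2 * (φ (F y) + ‖φ‖ * f y) := by
        simpa using (hscaled φ).2 hx hy ht1 ht2 hsum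
      rw [hφn] at h1
      have hx1 : φ (F x) ≤ ‖F x‖ := by
        calc φ (F x) ≤ |φ (F x)| := le_abs_self _
          _ = ‖φ (F x)‖ := (Real.norm_eq_abs _).symm
          _ ≤ ‖φ‖ * ‖F x‖ := φ.le_opNorm _
          _ = ‖F x‖ := by rw [hφn, one_mul]
      have hy1 : φ (F y) ≤ ‖F y‖ := by
        calc φ (F y) ≤ |φ (F y)| := le_abs_self _
          _ = ‖φ (F y)‖ := (Real.norm_eq_abs _).symm
          _ ≤ ‖φ‖ * ‖F y‖ := φ.le_opNorm _
          _ = ‖F y‖ := by rw [hφn, one_mul]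
      have hφx' : φ (F (t1 • x + t2 • y)) = ‖F (t1 • x + t2 • y)‖ := hφx
      nlinarith [mul_le_mul_of_nonneg_left hx1 ht1, mul_le_mul_of_nonneg_left hy1 ht2]
  -- bounds for p on balls
  have hCex : ∀ k : ℕ, ∃ C : ℝ, 0 ≤ C ∧ ∀ z : EuclideanSpace ℝ (Fin n),
      ‖z‖ ≤ (k:ℝ) + 1 → |p z| ≤ C := by
    intro k
    obtain ⟨C, hC⟩ := (isCompact_closedBall (0 : EuclideanSpace ℝ (Fin n)) ((k:ℝ)+1)).exists_bound_of_continuousOn hpc.continuousOn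
    refine ⟨C, ?_, ?_⟩
    · have := hC 0 (by simp [Metric.mem_closedBall]; positivity)
      exact le_trans (norm_nonneg _) this
    · intro z hz
      have := hC z (by simpa [Metric.mem_closedBall, dist_eq_norm] using hz)
      simpa [Real.norm_eq_abs] using this
  choose C hC0 hCb using hCex
  -- the sequences
  set a : ℕ → ℝ := fun k => 2 * ∑ j ∈ Finset.range (k+1), C j with hadef
  have ha0 : ∀ k, 0 ≤ a k := fun k => by
    have : (0:ℝ) ≤ ∑ j ∈ Finset.range (k+1), C j := Finset.sum_nonneg (fun j _ => hC0 j)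
    simp only [hadef]; linarith
  have hamono : ∀ j k : ℕ, j ≤ k → a j ≤ a k := by
    intro j k hjk
    simp only [hadef]
    have := Finset.sum_le_sum_of_subset_of_nonneg
      (Finset.range_subset_range.mpr (by omega : j+1 ≤ k+1)) (fun i _ _ => hC0 i)
    linarith
  have hage : ∀ k, 2 * C k ≤ a k := by
    intro k
    simp only [hadef]
    have := Finset.single_le_sum (f := fun j => C j) (fun j _ => hC0 j)
      (Finset.self_mem_range_succ k)
    linarith
  set e : ℕ → ℝ := fun k => (k:ℝ) * (a (k+2) - a (k+1)) + 1 with hedef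
  have hepos : ∀ k, 0 < e k := fun k => by
    have h1 : a (k+1) ≤ a (k+2) := hamono _ _ (by omega)
    have : (0:ℝ) ≤ (k:ℝ) := Nat.cast_nonneg k
    simp only [hedef]; nlinarith
  set c : ℕ → ℝ := fun k => ∑ j ∈ Finset.range k, e j with hcdef
  set d : ℕ → ℝ := fun k => ∑ j ∈ Finset.range k, e j * ((j:ℝ)+1) with hddef
  have hc0 : ∀ k, 0 ≤ c k := fun k =>
    Finset.sum_nonneg (fun j _ => (hepos j).le)
  have hcs : ∀ k, c (k+1) = c k + e k := fun k => Finset.sum_range_succ _ k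
  have hds : ∀ k, d (k+1) = d k + e k * ((k:ℝ)+1) := fun k => Finset.sum_range_succ _ k
  -- the terms
  set T : ℕ → X → ℝ := fun k x => a (k+1) * f x + c k * r x - d k with hTdef
  have hTcv : ∀ k, ConvexOn ℝ A (T k) := by
    intro k
    have h1 : ConvexOn ℝ A (fun x => a (k+1) • f x) := hfcv.smul (ha0 _)
    have h2 : ConvexOn ℝ A (fun x => c k • r x) := hrcv.smul (hc0 _)
    have h3 := (h1.add h2).add (convexOn_const (-(d k)) hAc)
    have e : T k = ((fun x => a (k+1) • f x) + fun x => c k • r x) + fun x => -(d k) := by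
      funext x
      simp only [hTdef, Pi.add_apply, smul_eq_mul]
      ring
    rw [e]; exact h3
  have hTco : ∀ k, ContinuousOn (T k) A := by
    intro k
    exact ((continuousOn_const.mul hfc).add (continuousOn_const.mul hrc)).sub continuousOn_const
  -- step inequalities
  have hstep_up : ∀ x ∈ A, ∀ j : ℕ, (j:ℝ) + 1 ≤ r x → T j x ≤ T (j+1) x := by
    intro x hx j hj
    have hΔa : 0 ≤ a (j+2) - a (j+1) := by linarith [hamono (j+1) (j+2) (by omega)]
    have hdiff : T (j+1) x - T j x = (a (j+2) - a (j+1)) * f x + e j * (r x - ((j:ℝ)+1)) := by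
      simp only [hTdef, hcs j, hds j, hedef]
      ring
    nlinarith [mul_nonneg hΔa (hf0 x hx), mul_nonneg (hepos j).le (by linarith : (0:ℝ) ≤ r x - ((j:ℝ)+1))]
  have hstep_down : ∀ x ∈ A, ∀ j : ℕ, r x ≤ (j:ℝ) → T (j+1) x ≤ T j x := by
    intro x hx j hj
    have hΔa : 0 ≤ a (j+2) - a (j+1) := by linarith [hamono (j+1) (j+2) (by omega)]
    have hdiff : T (j+1) x - T j x = (a (j+2) - a (j+1)) * f x + e j * (r x - ((j:ℝ)+1)) := by
      simp only [hTdef, hcs j, hds j, hedef]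
      ring
    have hfj : f x ≤ (j:ℝ) := le_trans (hfler x) hj
    have h1 : (a (j+2) - a (j+1)) * f x ≤ (a (j+2) - a (j+1)) * (j:ℝ) :=
      mul_le_mul_of_nonneg_left hfj hΔa
    have h2 : e j * (r x - ((j:ℝ)+1)) ≤ e j * (-1) :=
      mul_le_mul_of_nonneg_left (by linarith) (hepos j).le
    have he : e j = (j:ℝ) * (a (j+2) - a (j+1)) + 1 := by simp [hedef]
    nlinarith
  -- the function ψ
  set ψ : X → ℝ := fun x => max (T (⌊r x⌋₊) x) (T (⌊r x⌋₊ + 1) x) with hψdef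
  have hTle : ∀ x ∈ A, ∀ k, T k x ≤ ψ x := by
    intro x hx k
    have hr0x : 0 ≤ r x := hr0 x hx
    rcases le_or_gt k (⌊r x⌋₊) with hk | hk
    · refine le_max_of_le_left (chain_up (u := fun j => T j x) (⌊r x⌋₊) ?_ k hk)
      intro j hj
      refine hstep_up x hx j ?_
      have h1 : ((j:ℝ) + 1) ≤ (⌊r x⌋₊ : ℝ) := by exact_mod_cast hj
      exact h1.trans (Nat.floor_le hr0x)
    · refine le_max_of_le_right (chain_down (u := fun j => T j x) (⌊r x⌋₊ + 1) ?_ k hk)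
      intro j hj
      refine hstep_down x hx j ?_
      have h1 : ((⌊r x⌋₊ : ℝ) + 1) ≤ (j:ℝ) := by exact_mod_cast hj
      exact le_trans (Nat.lt_floor_add_one (r x)).le h1
  have hψcv : ConvexOn ℝ A ψ := by
    refine ⟨hAc, ?_⟩
    intro x hx y hy t1 t2 ht1 ht2 hsum
    have hxt : t1 • x + t2 • y ∈ A := hAc hx hy ht1 ht2 hsum
    set m := ⌊r (t1 • x + t2 • y)⌋₊ with hm
    have key : ∀ k0 : ℕ, T k0 (t1 • x + t2 • y) ≤ t1 • ψ x + t2 • ψ y := by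
      intro k0
      have h1 : T k0 (t1 • x + t2 • y) ≤ t1 * T k0 x + t2 * T k0 y := by
        simpa using (hTcv k0).2 hx hy ht1 ht2 hsum
      have h2 := mul_le_mul_of_nonneg_left (hTle x hx k0) ht1
      have h3 := mul_le_mul_of_nonneg_left (hTle y hy k0) ht2
      simp only [smul_eq_mul]
      linarith
    have : ψ (t1 • x + t2 • y) = max (T m (t1 • x + t2 • y)) (T (m+1) (t1 • x + t2 • y)) := by
      simp [hψdef, hm]
    rw [this]
    exact max_le (key m) (key (m+1))
  -- convexity of p ∘ F + ψ
  have hmain : ConvexOn ℝ A (fun x => p (F x) + ψ x) := by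
    refine ⟨hAc, ?_⟩
    intro x hx y hy t1 t2 ht1 ht2 hsum
    have hxt : t1 • x + t2 • y ∈ A := hAc hx hy ht1 ht2 hsum
    set xt := t1 • x + t2 • y with hxtdef
    obtain ⟨φ, hφ⟩ := exists_subgradient isOpen_univ hp hpc.continuousOn (mem_univ (F xt))
    set m := ⌊r xt⌋₊ with hm
    have hr0xt : 0 ≤ r xt := hr0 xt hxt
    have hrm : r xt < (m:ℝ) + 1 := Nat.lt_floor_add_one _
    have hFxtn : ‖F xt‖ ≤ r xt := by
      have := hf0 xt hxt
      simp only [hrdef]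
      linarith
    -- norm bound on the subgradient
    have hφnorm : ‖φ‖ ≤ 2 * C (m+1) := by
      have hub : ∀ v : EuclideanSpace ℝ (Fin n), ‖v‖ ≤ 1 → φ v ≤ 2 * C (m+1) := by
        intro v hv
        have h1 := hφ (F xt + v) (mem_univ _)
        rw [add_sub_cancel_left] at h1
        have hb1 : |p (F xt + v)| ≤ C (m+1) := by
          refine hCb (m+1) _ ?_
          have := norm_add_le (F xt) v
          push_cast
          linarith
        have hb2 : |p (F xt)| ≤ C (m+1) := by
          refine hCb (m+1) _ ?_
          push_cast
          linarith
        have := abs_le.mp hb1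
        have := abs_le.mp hb2
        linarith [(abs_le.mp hb1).1, (abs_le.mp hb1).2, (abs_le.mp hb2).1, (abs_le.mp hb2).2]
      refine ContinuousLinearMap.opNorm_le_bound φ (by linarith [hC0 (m+1)]) ?_
      intro u
      rcases eq_or_ne u 0 with rfl | hu
      · simp
      · have hun : 0 < ‖u‖ := norm_pos_iff.mpr hu
        have hv1 : φ (‖u‖⁻¹ • u) ≤ 2 * C (m+1) := hub _ (by
          rw [norm_smul, Real.norm_eq_abs, abs_of_nonneg (by positivity),
            inv_mul_cancel₀ hun.ne'])
        have hv2 : φ (-(‖u‖⁻¹ • u)) ≤ 2 * C (m+1) := hub _ (by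
          rw [norm_neg, norm_smul, Real.norm_eq_abs, abs_of_nonneg (by positivity),
            inv_mul_cancel₀ hun.ne'])
        rw [map_smul, smul_eq_mul] at hv1
        rw [map_neg, map_smul, smul_eq_mul] at hv2
        rw [Real.norm_eq_abs, abs_le]
        have hinv : ‖u‖ * ‖u‖⁻¹ = 1 := mul_inv_cancel₀ hun.ne'
        have h7 : φ u = ‖u‖ * (‖u‖⁻¹ * φ u) := by rw [← mul_assoc, hinv, one_mul]
        have h8 : -(φ u) = ‖u‖ * (-(‖u‖⁻¹ * φ u)) := by
          rw [mul_neg, ← mul_assoc, hinv, one_mul]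
        constructor
        · linarith [mul_le_mul_of_nonneg_left hv2 hun.le, h8]
        · linarith [mul_le_mul_of_nonneg_left hv1 hun.le, h7]
    -- choose the active index k0
    have hψxt : ψ xt = max (T m xt) (T (m+1) xt) := by simp [hψdef, hm]
    have hk0 : ∃ k0 : ℕ, m ≤ k0 ∧ ψ xt = T k0 xt := by
      rcases max_cases (T m xt) (T (m+1) xt) with ⟨h1, _⟩ | ⟨h1, _⟩
      · exact ⟨m, le_refl _, by rw [hψxt, h1]⟩
      · exact ⟨m+1, by omega, by rw [hψxt, h1]⟩
    obtain ⟨k0, hk0m, hψeq⟩ := hk0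
    have hφa : ‖φ‖ ≤ a (k0+1) :=
      le_trans hφnorm (le_trans (hage (m+1)) (hamono (m+1) (k0+1) (by omega)))
    set cc := p (F xt) - φ (F xt) with hccdef
    -- the convex comparison function G
    have hGcv : ConvexOn ℝ A (fun x' => (φ (F x') + ‖φ‖ * f x') +
        ((a (k0+1) - ‖φ‖) • f x' + (c k0 • r x' + (cc - d k0)))) :=
      (hscaled φ).add ((hfcv.smul (by linarith)).add
        ((hrcv.smul (hc0 _)).add (convexOn_const _ hAc)))
    have hle := hGcv.2 hx hy ht1 ht2 hsum
    simp only [smul_eq_mul] at hle ⊢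
    have hid : ∀ x' : X, (φ (F x') + ‖φ‖ * f x') +
        ((a (k0+1) - ‖φ‖) * f x' + (c k0 * r x' + (cc - d k0))) =
        φ (F x') + cc + T k0 x' := by
      intro x'
      simp only [hTdef]
      ring
    have hsub : ∀ x' ∈ A, φ (F x') + cc + T k0 x' ≤ p (F x') + ψ x' := by
      intro x' hx'
      have h1 := hφ (F x') (mem_univ _)
      rw [map_sub] at h1
      have h2 := hTle x' hx' k0
      simp only [hccdef]
      linarith
    have heq : φ (F xt) + cc + T k0 xt = p (F xt) + ψ xt := by
      rw [hψeq]; simp only [hccdef]; ring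
    have h1 := mul_le_mul_of_nonneg_left (hsub x hx) ht1
    have h2 := mul_le_mul_of_nonneg_left (hsub y hy) ht2
    rw [hid xt, hid x, hid y] at hle
    calc p (F xt) + ψ xt = φ (F xt) + cc + T k0 xt := heq.symm
      _ ≤ t1 * (φ (F x) + cc + T k0 x) + t2 * (φ (F y) + cc + T k0 y) := hle
      _ ≤ t1 * (p (F x) + ψ x) + t2 * (p (F y) + ψ y) := by linarith
  -- continuity of ψ
  have hψco : ContinuousOn ψ A := by
    set Tmax : ℕ → X → ℝ := fun M => Nat.rec (T 0) (fun k ih x => max (ih x) (T (k+1) x)) M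
      with hTmaxdef
    have hTmax0 : Tmax 0 = T 0 := rfl
    have hTmaxs : ∀ M, Tmax (M+1) = fun x => max (Tmax M x) (T (M+1) x) := fun M => rfl
    have hTmaxco : ∀ M, ContinuousOn (Tmax M) A := by
      intro M
      induction M with
      | zero => rw [hTmax0]; exact hTco 0
      | succ M ih => rw [hTmaxs]; exact ih.sup (hTco (M+1))
    have hTmaxle : ∀ M, ∀ x ∈ A, Tmax M x ≤ ψ x := by
      intro M
      induction M with
      | zero => intro x hx; rw [hTmax0]; exact hTle x hx 0
      | succ M ih =>
        intro x hx
        rw [hTmaxs]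
        exact max_le (ih x hx) (hTle x hx (M+1))
    have hTmaxge : ∀ M k, k ≤ M → ∀ x, T k x ≤ Tmax M x := by
      intro M
      induction M with
      | zero => intro k hk x; rw [Nat.le_zero.mp hk, hTmax0]
      | succ M ih =>
        intro k hk x
        rw [hTmaxs]
        rcases Nat.lt_succ_iff_lt_or_eq.mp (Nat.lt_succ_of_le hk) with h' | h'
        · exact le_max_of_le_left (ih k (Nat.lt_succ_iff.mp h') x)
        · subst h'; exact le_max_right _ _
    have hTmaxeq : ∀ M, ∀ x ∈ A, ⌊r x⌋₊ + 1 ≤ M → ψ x = Tmax M x := by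
      intro M x hx hM
      refine le_antisymm ?_ (hTmaxle M x hx)
      have h1 : ψ x = max (T (⌊r x⌋₊) x) (T (⌊r x⌋₊ + 1) x) := by simp [hψdef]
      rw [h1]
      exact max_le (hTmaxge M _ (by omega) x) (hTmaxge M _ hM x)
    intro x0 hx0
    have hrCA : ContinuousAt r x0 := (hrc x0 hx0).continuousAt (hAo.mem_nhds hx0)
    set M := ⌊r x0⌋₊ + 1 with hM
    have hlt : r x0 < ((⌊r x0⌋₊ : ℝ) + 1) := Nat.lt_floor_add_one _
    have hV : {x' : X | r x' < ((⌊r x0⌋₊ : ℝ) + 1)} ∈ nhds x0 :=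
      hrCA (Iio_mem_nhds hlt)
    have hVA : {x' : X | r x' < ((⌊r x0⌋₊ : ℝ) + 1)} ∩ A ∈ nhds x0 :=
      Filter.inter_mem hV (hAo.mem_nhds hx0)
    have hevEq : (fun x' => Tmax M x') =ᶠ[nhds x0] ψ := by
      refine Filter.eventuallyEq_of_mem hVA ?_
      rintro x' ⟨hr', hx'A⟩
      have hfl : ⌊r x'⌋₊ + 1 ≤ M := by
        have h2 : ⌊r x'⌋₊ < ⌊r x0⌋₊ + 1 := by
          rcases le_or_gt 0 (r x') with h3 | h3
          · exact_mod_cast (Nat.floor_lt h3).mpr (by exact_mod_cast hr')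
          · have : ⌊r x'⌋₊ = 0 := Nat.floor_eq_zero.mpr (by linarith [ (by norm_num : (0:ℝ) < 1) ] )
            omega
        omega
      exact (hTmaxeq M x' hx'A hfl).symm
    have hca : ContinuousAt ψ x0 :=
      ((hTmaxco M).continuousAt (hAo.mem_nhds hx0)).congr hevEq
    exact hca.continuousWithinAt
  exact ⟨ψ, hψco, hψcv, hmain⟩

/-- If `F : A → ℝⁿ` is d.c. on the open convex set `A` and
`g : ℝⁿ → ℝ` is d.c., then `g ∘ F` is d.c. on `A`. -/
theorem dc_comp_finite_dim_target {X : Type*} [NormedAddCommGroup X] [NormedSpace ℝ X]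
    (A : Set X) (hAopen : IsOpen A) (hAconv : Convex ℝ A) (n : ℕ)
    (F : X → EuclideanSpace ℝ (Fin n)) (hF : IsDCOn A F)
    (g : EuclideanSpace ℝ (Fin n) → ℝ) (hg : IsDCFnOn (Set.univ) g) :
    IsDCFnOn A (g ∘ F) := by
  rcases A.eq_empty_or_nonempty with rfl | ⟨a0, ha0⟩
  · exact ⟨fun _ => 0, fun _ => 0, continuousOn_empty _, continuousOn_empty _,
      convexOn_const 0 convex_empty, convexOn_const 0 convex_empty,
      fun x hx => absurd hx (Set.notMem_empty _)⟩
  obtain ⟨hFc, f, hctl⟩ := hF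
  have hfcv : ConvexOn ℝ A f := by
    have := hctl.2 0 (by simp)
    simpa using this
  obtain ⟨φf, hφf⟩ := exists_subgradient hAopen hfcv hctl.1 ha0
  set f' : X → ℝ := fun x => f x + ((-φf) x + (φf a0 - f a0)) with hf'def
  have hctl' : IsControlOn A F f' := by
    constructor
    · refine hctl.1.add (Continuous.continuousOn ?_)
      exact ((-φf).continuous).add continuous_const
    · intro φ hφ
      have h1 := (hctl.2 φ hφ).add (affine_convexOn hAconv (-φf) (φf a0 - f a0))
      have e : (fun x => φ (F x) + f' x) = ((fun x => φ (F x) + f x) + fun x => (-φf) x + (φf a0 - f a0)) := by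
        funext x
        simp only [hf'def, Pi.add_apply, ContinuousLinearMap.neg_apply]
        ring
      rw [e]; exact h1
  have hf'0 : ∀ x ∈ A, 0 ≤ f' x := by
    intro x hx
    have := hφf x hx
    rw [map_sub] at this
    simp only [hf'def, ContinuousLinearMap.neg_apply]
    linarith
  obtain ⟨pp, qq, hppc, hqqc, hppcv, hqqcv, hgpq⟩ := hg
  rw [continuousOn_univ] at hppc hqqc
  obtain ⟨ψp, hψpc, hψpcv, hPcv⟩ := comp_convex_aux hAopen hAconv hFc hctl' hf'0 hppcv hppc
  obtain ⟨ψq, hψqc, hψqcv, hQcv⟩ := comp_convex_aux hAopen hAconv hFc hctl' hf'0 hqqcv hqqc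
  refine ⟨fun x => (pp (F x) + ψp x) + ψq x, fun x => (qq (F x) + ψq x) + ψp x, ?_, ?_, ?_, ?_, ?_⟩
  · exact ((hppc.comp_continuousOn hFc).add hψpc).add hψqc
  · exact ((hqqc.comp_continuousOn hFc).add hψqc).add hψpc
  · exact hPcv.add hψqcv
  · exact hQcv.add hψpcv
  · intro x hx
    have := hgpq (F x) (Set.mem_univ _)
    simp only [Function.comp_apply, this]
    ring
end

section
/- Let X, Y, Z be real normed linear spaces, A ⊆ X an open convex set, F : A → Y a d.c. mapping, and G : Y → Z a d.c. mapping admitting a control function g : Y → ℝ that is bounded on every bounded subset of Y. Then G ∘ F is d.c. on A. -/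
open Set Metric Bornology Filter NNReal

open intervalIntegral


lemma ctrl_defect {X Y : Type*} [NormedAddCommGroup X] [NormedSpace ℝ X]
    [NormedAddCommGroup Y] [NormedSpace ℝ Y]
    {C : Set X} {F : X → Y} {f : X → ℝ}
    (hctrl : ∀ φ : Y →L[ℝ] ℝ, ‖φ‖ ≤ 1 → ConvexOn ℝ C (fun x => φ (F x) + f x))
    {x1 x2 : X} (h1 : x1 ∈ C) (h2 : x2 ∈ C) {a b : ℝ} (ha : 0 ≤ a) (hb : 0 ≤ b)
    (hab : a + b = 1) :
    ‖F (a • x1 + b • x2) - (a • F x1 + b • F x2)‖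
      ≤ a * f x1 + b * f x2 - f (a • x1 + b • x2) := by
  obtain ⟨ψ, hψ1, hψ2⟩ := exists_dual_vector'' ℝ (F (a • x1 + b • x2) - (a • F x1 + b • F x2))
  have hψ2' : ψ (F (a • x1 + b • x2) - (a • F x1 + b • F x2)) = ‖F (a • x1 + b • x2) - (a • F x1 + b • F x2)‖ := by exact_mod_cast hψ2
  have hc := (hctrl ψ hψ1).2 h1 h2 ha hb hab
  simp only [smul_eq_mul] at hc
  have l1 : ψ (F (a • x1 + b • x2) - (a • F x1 + b • F x2))
      = ψ (F (a • x1 + b • x2)) - (a * ψ (F x1) + b * ψ (F x2)) := by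
    simp [map_sub, map_add, map_smul, smul_eq_mul]
  have l2 : (ψ (F (a • x1 + b • x2)) : ℝ) = ‖F (a • x1 + b • x2) - (a • F x1 + b • F x2)‖
      + (a * ψ (F x1) + b * ψ (F x2)) := by
    rw [← hψ2', l1]; ring
  linarith [hc, l2.symm.le]


lemma exists_affine_minorant {X : Type*} [NormedAddCommGroup X] [NormedSpace ℝ X]
    {A : Set X} (hAopen : IsOpen A) {f : X → ℝ}
    (hconv : ConvexOn ℝ A f) (hcont : ContinuousOn f A)
    {a₀ : X} (ha₀ : a₀ ∈ A) :
    ∃ φ : X →L[ℝ] ℝ, ∃ c : ℝ, ∀ x ∈ A, φ x + c ≤ f x := by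
  set S : Set (X × ℝ) := {p : X × ℝ | p.1 ∈ A ∧ f p.1 < p.2} with hS
  have hSopen : IsOpen S := by
    rw [isOpen_iff_mem_nhds]
    rintro ⟨x, t⟩ ⟨hx, hxt⟩
    have hfx : ContinuousAt f x := hcont.continuousAt (hAopen.mem_nhds hx)
    have h1 : {p : X × ℝ | p.1 ∈ A} ∈ nhds (x, t) :=
      (continuous_fst.continuousAt (x := (x,t))) (hAopen.mem_nhds hx)
    have hcc : ContinuousAt (fun p : X × ℝ => p.2 - f p.1) (x, t) :=
      (continuous_snd.continuousAt).sub (hfx.comp continuous_fst.continuousAt)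
    have h0 : (0:ℝ) < t - f x := sub_pos.mpr hxt
    have h2 : {p : X × ℝ | f p.1 < p.2} ∈ nhds (x, t) := by
      filter_upwards [hcc (Ioi_mem_nhds h0)] with p hp
      simpa [sub_pos] using hp
    filter_upwards [h1, h2] with p hp1 hp2
    exact ⟨hp1, hp2⟩
  have hSconv : Convex ℝ S := by
    intro p hp q hq a b ha hb hab
    refine ⟨hconv.1 hp.1 hq.1 ha hb hab, ?_⟩
    have hf := hconv.2 hp.1 hq.1 ha hb hab
    simp only [Prod.fst_add, Prod.snd_add, Prod.smul_fst, Prod.smul_snd, smul_eq_mul] at *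
    rcases lt_or_eq_of_le ha with h | h
    · have h1 := mul_lt_mul_of_pos_left hp.2 h
      have h2 := mul_le_mul_of_nonneg_left hq.2.le hb
      linarith
    · have h2 := mul_lt_mul_of_pos_left hq.2 (by linarith : (0:ℝ) < b)
      have h1 : a * f p.1 ≤ a * p.2 := by rw [← h]; simp
      linarith
  have hnotmem : ((a₀, f a₀) : X × ℝ) ∉ S := by
    rintro ⟨-, h⟩; exact lt_irrefl _ h
  obtain ⟨φ, hφ⟩ := geometric_hahn_banach_open_point hSconv hSopen hnotmem
  set r : ℝ := φ (0, 1) with hr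
  set φ₁ : X →L[ℝ] ℝ := φ.comp (ContinuousLinearMap.inl ℝ X ℝ) with hφ₁
  have hdec : ∀ x t, φ (x, t) = φ₁ x + t * r := by
    intro x t
    have hsplit : (x, t) = (x, (0:ℝ)) + t • ((0:X), (1:ℝ)) := by
      simp [Prod.ext_iff]
    rw [hsplit, map_add, map_smul, smul_eq_mul]
    rfl
  have hkey : ∀ x ∈ A, ∀ t, f x < t → φ₁ x + t * r < φ₁ a₀ + f a₀ * r := by
    intro x hx t ht
    have := hφ (x, t) ⟨hx, ht⟩
    rwa [hdec, hdec] at this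
  have hrneg : r < 0 := by
    have h2 := hkey a₀ ha₀ (f a₀ + 1) (by linarith)
    nlinarith
  have hrne : r ≠ 0 := ne_of_lt hrneg
  have hlim : ∀ x ∈ A, φ₁ x + f x * r ≤ φ₁ a₀ + f a₀ * r := by
    intro x hx
    by_contra hcon
    push_neg at hcon
    have hd : 0 < (φ₁ x + f x * r - (φ₁ a₀ + f a₀ * r)) := by linarith
    set d := φ₁ x + f x * r - (φ₁ a₀ + f a₀ * r) with hdd
    set ε := d / (2 * (-r)) with hε
    have hεpos : 0 < ε := by
      apply div_pos hd; linarith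
    have hk := hkey x hx (f x + ε) (by linarith)
    have hexp : φ₁ x + (f x + ε) * r = φ₁ x + f x * r + ε * r := by ring
    rw [hexp] at hk
    have her : ε * r = -(d / 2) := by
      rw [hε]; field_simp
    rw [her] at hk
    simp only [hdd] at hk
    linarith
  have hrpos : 0 < -r := by linarith
  refine ⟨(-r)⁻¹ • φ₁, f a₀ - (-r)⁻¹ * φ₁ a₀, fun x hx => ?_⟩
  have hle := hlim x hx
  have hs : (-r)⁻¹ * r = -1 := by field_simp
  have hmul := mul_le_mul_of_nonneg_left hle (le_of_lt (inv_pos.mpr hrpos))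
  have key : ∀ u v : ℝ, (-r)⁻¹ * (u + v * r) = (-r)⁻¹ * u - v := by
    intro u v; field_simp; ring
  rw [key, key] at hmul
  simp only [ContinuousLinearMap.smul_apply, smul_eq_mul]
  linarith


lemma convex_bdd_lip {Y : Type*} [NormedAddCommGroup Y] [NormedSpace ℝ Y]
    {g : Y → ℝ} (hconv : ConvexOn ℝ univ g) {R M : ℝ}
    (hM : ∀ y : Y, ‖y‖ ≤ R + 1 → |g y| ≤ M) :
    ∀ y1 y2 : Y, ‖y1‖ ≤ R → ‖y2‖ ≤ R → g y1 - g y2 ≤ 2 * M * ‖y1 - y2‖ := by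
  intro y1 y2 h1 h2
  rcases eq_or_ne y1 y2 with rfl | hne
  · have hM0 : 0 ≤ M := le_trans (abs_nonneg _) (hM y1 (by linarith))
    simp only [sub_self, norm_zero, mul_zero]; linarith [sub_self (g y1)]
  · set u : ℝ := ‖y1 - y2‖ with hu
    have hupos : 0 < u := by
      simp only [hu, norm_pos_iff]; exact sub_ne_zero_of_ne hne
    set y3 : Y := y1 + u⁻¹ • (y1 - y2) with hy3
    have hy3norm : ‖y3‖ ≤ R + 1 := by
      calc ‖y3‖ ≤ ‖y1‖ + ‖u⁻¹ • (y1 - y2)‖ := norm_add_le _ _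
      _ = ‖y1‖ + u⁻¹ * u := by
          rw [norm_smul, Real.norm_eq_abs, abs_of_pos (inv_pos.mpr hupos)]
      _ ≤ R + 1 := by rw [inv_mul_cancel₀ (ne_of_gt hupos)]; linarith
    have hcombo : (1/(u+1)) • y2 + (u/(u+1)) • y3 = y1 := by
      rw [hy3]
      match_scalars <;> field_simp <;> ring
    have ht0 : (0:ℝ) ≤ 1/(u+1) := by positivity
    have hs0 : (0:ℝ) ≤ u/(u+1) := by positivity
    have hsum : 1/(u+1) + u/(u+1) = 1 := by field_simp; ring
    have hc := hconv.2 (mem_univ y2) (mem_univ y3) ht0 hs0 hsum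
    rw [hcombo] at hc
    simp only [smul_eq_mul] at hc
    have habs3 : g y3 ≤ M := le_trans (le_abs_self _) (hM y3 hy3norm)
    have habs2 : -M ≤ g y2 := neg_le_of_abs_le (hM y2 (by linarith))
    have hM0 : 0 ≤ M := le_trans (abs_nonneg _) (hM y2 (by linarith))
    have hsu : u/(u+1) ≤ u := by
      rw [div_le_iff₀ (by linarith)]; nlinarith
    have h6 : g y3 - g y2 ≤ 2*M := by linarith
    have h7 : (u/(u+1)) * (g y3 - g y2) ≤ (u/(u+1)) * (2*M) :=
      mul_le_mul_of_nonneg_left h6 hs0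
    have h8 : (u/(u+1)) * (2*M) ≤ u * (2*M) :=
      mul_le_mul_of_nonneg_right hsu (by linarith)
    have h9 : (1/(u+1)) * g y2 - g y2 = -((u/(u+1)) * g y2) := by
      field_simp; ring
    nlinarith [hc, h7, h8]


lemma G_bounded_on_ball {Y Z : Type*} [NormedAddCommGroup Y] [NormedSpace ℝ Y]
    [NormedAddCommGroup Z] [NormedSpace ℝ Z]
    {G : Y → Z} (hGcont : Continuous G) {g : Y → ℝ}
    (hdef : ∀ (y1 y2 : Y) (a b : ℝ), 0 ≤ a → 0 ≤ b → a + b = 1 →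
      ‖G (a • y1 + b • y2) - (a • G y1 + b • G y2)‖
        ≤ a * g y1 + b * g y2 - g (a • y1 + b • y2))
    {R M : ℝ} (hR : 0 ≤ R) (hM : ∀ y : Y, ‖y‖ ≤ R → |g y| ≤ M) :
    ∃ B, ∀ y : Y, ‖y‖ ≤ R → ‖G y‖ ≤ B := by
  have hM0 : 0 ≤ M := le_trans (abs_nonneg _) (hM 0 (by simpa using hR))
  -- step inequality
  have hstep : ∀ w : Y, ‖w‖ ≤ R →
      ‖G w - G 0‖ ≤ 2 * ‖G ((2:ℝ)⁻¹ • w) - G 0‖ + 4 * M := by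
    intro w hw
    have h1 := hdef 0 w (2:ℝ)⁻¹ (2:ℝ)⁻¹ (by norm_num) (by norm_num) (by norm_num)
    rw [smul_zero, zero_add] at h1
    have hg0 : |g 0| ≤ M := hM 0 (by simpa using hR)
    have hgw : |g w| ≤ M := hM w hw
    have hghw : |g ((2:ℝ)⁻¹ • w)| ≤ M := by
      apply hM
      rw [norm_smul]
      simp only [norm_inv, Real.norm_ofNat]
      linarith [norm_nonneg w]
    have h2 : ‖G ((2:ℝ)⁻¹ • w) - ((2:ℝ)⁻¹ • G 0 + (2:ℝ)⁻¹ • G w)‖ ≤ 2 * M := by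
      refine le_trans h1 ?_
      have := abs_le.mp hg0
      have := abs_le.mp hgw
      have := abs_le.mp hghw
      linarith
    have hid : G w - G 0
        = (2:ℝ) • (G ((2:ℝ)⁻¹ • w) - G 0)
          - (2:ℝ) • (G ((2:ℝ)⁻¹ • w) - ((2:ℝ)⁻¹ • G 0 + (2:ℝ)⁻¹ • G w)) := by
      module
    calc ‖G w - G 0‖ = ‖(2:ℝ) • (G ((2:ℝ)⁻¹ • w) - G 0)
          - (2:ℝ) • (G ((2:ℝ)⁻¹ • w) - ((2:ℝ)⁻¹ • G 0 + (2:ℝ)⁻¹ • G w))‖ := by rw [← hid]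
    _ ≤ ‖(2:ℝ) • (G ((2:ℝ)⁻¹ • w) - G 0)‖
          + ‖(2:ℝ) • (G ((2:ℝ)⁻¹ • w) - ((2:ℝ)⁻¹ • G 0 + (2:ℝ)⁻¹ • G w))‖ := norm_sub_le _ _
    _ ≤ 2 * ‖G ((2:ℝ)⁻¹ • w) - G 0‖ + 4 * M := by
        rw [norm_smul, norm_smul]
        simp only [Real.norm_ofNat]
        linarith [h2]
  -- iterate
  have hiter : ∀ (j : ℕ) (y : Y), ‖y‖ ≤ R →
      ‖G y - G 0‖ ≤ 2^j * ‖G (((2:ℝ)⁻¹)^j • y) - G 0‖ + 8 * M * 2^j := by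
    intro j
    induction j with
    | zero => intro y hy; simp; linarith [norm_nonneg (G y - G 0)]
    | succ k ih =>
      intro y hy
      have hyk : ‖((2:ℝ)⁻¹)^k • y‖ ≤ R := by
        rw [norm_smul]
        have : ‖((2:ℝ)⁻¹)^k‖ ≤ 1 := by
          rw [Real.norm_eq_abs, abs_pow]
          have habs : |(2:ℝ)⁻¹| = (2:ℝ)⁻¹ := by norm_num
          rw [habs]
          apply pow_le_one₀ <;> norm_num
        nlinarith [norm_nonneg y]
      have h1 := hstep (((2:ℝ)⁻¹)^k • y) hyk
      rw [smul_smul, show (2:ℝ)⁻¹ * (2:ℝ)⁻¹^k = (2:ℝ)⁻¹^(k+1) by rw [pow_succ]; ring] at h1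
      have h2 := ih y hy
      calc ‖G y - G 0‖ ≤ 2^k * ‖G (((2:ℝ)⁻¹)^k • y) - G 0‖ + 8 * M * 2^k := h2
      _ ≤ 2^k * (2 * ‖G (((2:ℝ)⁻¹)^(k+1) • y) - G 0‖ + 4 * M) + 8 * M * 2^k := by
          have h2k : (0:ℝ) ≤ 2^k := by positivity
          nlinarith [mul_le_mul_of_nonneg_left h1 h2k]
      _ ≤ 2^(k+1) * ‖G (((2:ℝ)⁻¹)^(k+1) • y) - G 0‖ + 8 * M * 2^(k+1) := by
          have h2k : (0:ℝ) ≤ 2^k := by positivity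
          set c := ‖G (((2:ℝ)⁻¹)^(k+1) • y) - G 0‖ with hc
          have h3 : (2:ℝ)^(k+1) * c = 2 * (2^k * c) := by rw [pow_succ]; ring
          have h4 : 8*M*(2:ℝ)^(k+1) = 16*(M*2^k) := by rw [pow_succ]; ring
          have h5 : 2^k * (2 * c + 4 * M) = 2*(2^k*c) + 4*(M*2^k) := by ring
          have h6 : (0:ℝ) ≤ M*2^k := mul_nonneg hM0 h2k
          have h7 : 8*M*(2:ℝ)^k = 8*(M*2^k) := by ring
          linarith
  -- continuity at 0
  obtain ⟨δ, hδpos, hδ⟩ := Metric.continuousAt_iff.mp hGcont.continuousAt (ε := 1) one_pos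
  obtain ⟨k, hk⟩ := exists_pow_lt_of_lt_one (show (0:ℝ) < δ/(R+1) by positivity)
    (show (2:ℝ)⁻¹ < 1 by norm_num)
  refine ⟨‖G 0‖ + 2^k + 8 * M * 2^k, fun y hy => ?_⟩
  have hsmall : ‖G (((2:ℝ)⁻¹)^k • y) - G 0‖ ≤ 1 := by
    have hd : dist (((2:ℝ)⁻¹)^k • y) 0 < δ := by
      rw [dist_zero_right, norm_smul, Real.norm_eq_abs, abs_pow]
      have h1 : |(2:ℝ)⁻¹| = ((2:ℝ)⁻¹) := by norm_num
      rw [h1]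
      have h2 : ((2:ℝ)⁻¹)^k * ‖y‖ ≤ ((2:ℝ)⁻¹)^k * (R+1) := by
        apply mul_le_mul_of_nonneg_left (by linarith) (by positivity)
      calc ((2:ℝ)⁻¹)^k * ‖y‖ ≤ ((2:ℝ)⁻¹)^k * (R+1) := h2
      _ < δ/(R+1) * (R+1) := by
          apply mul_lt_mul_of_pos_right hk (by linarith)
      _ = δ := by field_simp
    have := hδ hd
    rw [dist_eq_norm] at this
    exact this.le
  have := hiter k y hy
  have hGy := norm_sub_norm_le (G y) (G 0)
  have h2k : (0:ℝ) ≤ 2^k := by positivity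
  nlinarith [this, hsmall]


lemma G_lip {Y Z : Type*} [NormedAddCommGroup Y] [NormedSpace ℝ Y]
    [NormedAddCommGroup Z] [NormedSpace ℝ Z]
    {G : Y → Z} {g : Y → ℝ}
    (hg2 : ∀ ψ : Z →L[ℝ] ℝ, ‖ψ‖ ≤ 1 → ConvexOn ℝ univ (fun y => ψ (G y) + g y))
    {R BG M : ℝ}
    (hBG : ∀ y : Y, ‖y‖ ≤ R + 1 → ‖G y‖ ≤ BG) (hM : ∀ y : Y, ‖y‖ ≤ R + 1 → |g y| ≤ M) :
    ∀ y1 y2 : Y, ‖y1‖ ≤ R → ‖y2‖ ≤ R →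
      ‖G y1 - G y2‖ ≤ (2 * BG + 4 * M) * ‖y1 - y2‖ := by
  intro y1 y2 h1 h2
  obtain ⟨ψ, hψ1, hψ2⟩ := exists_dual_vector'' ℝ (G y1 - G y2)
  have hψ2' : ψ (G y1 - G y2) = ‖G y1 - G y2‖ := by exact_mod_cast hψ2
  have huconv := hg2 ψ hψ1
  have hubdd : ∀ y : Y, ‖y‖ ≤ R + 1 → |ψ (G y) + g y| ≤ BG + M := by
    intro y hy
    have e1 : |ψ (G y)| ≤ ‖G y‖ := by
      calc |ψ (G y)| = ‖ψ (G y)‖ := (Real.norm_eq_abs _).symm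
      _ ≤ ‖ψ‖ * ‖G y‖ := ψ.le_opNorm _
      _ ≤ 1 * ‖G y‖ := by
          apply mul_le_mul_of_nonneg_right hψ1 (norm_nonneg _)
      _ = ‖G y‖ := one_mul _
    calc |ψ (G y) + g y| ≤ |ψ (G y)| + |g y| := abs_add_le _ _
    _ ≤ BG + M := add_le_add (le_trans e1 (hBG y hy)) (hM y hy)
  have hulip := convex_bdd_lip huconv hubdd y1 y2 h1 h2
  have hglip := convex_bdd_lip (by simpa using hg2 0 (by simp)) hM y2 y1 h2 h1
  have hexp : ‖G y1 - G y2‖ = (ψ (G y1) + g y1) - (ψ (G y2) + g y2) + (g y2 - g y1) := by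
    rw [← hψ2', map_sub]; ring
  have hnorm : ‖y2 - y1‖ = ‖y1 - y2‖ := norm_sub_rev _ _
  rw [hexp]
  rw [hnorm] at hglip
  linarith [hulip, hglip]


lemma lambda_pack (τ : ℝ → ℝ) (hmono : Monotone τ) :
    ∃ Λ : ℝ → ℝ, Continuous Λ ∧ ConvexOn ℝ univ Λ ∧
      ∀ a b : ℝ, a ≤ b → τ a * (b - a) ≤ Λ b - Λ a := by
  set Λ : ℝ → ℝ := fun s => ∫ u in (0:ℝ)..s, τ u with hΛ
  have hint : ∀ a b : ℝ, IntervalIntegrable τ MeasureTheory.volume a b :=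
    fun a b => hmono.intervalIntegrable
  have hdiff : ∀ a b : ℝ, Λ b - Λ a = ∫ u in a..b, τ u := by
    intro a b
    have := integral_add_adjacent_intervals (hint 0 a) (hint a b)
    simp only [Λ]
    linarith [this]
  have hlow : ∀ a b : ℝ, a ≤ b → τ a * (b - a) ≤ Λ b - Λ a := by
    intro a b hab
    rw [hdiff]
    have h1 : ∫ _ in a..b, τ a = (b - a) • τ a := integral_const (τ a)
    have h2 : ∫ u in a..b, τ a ≤ ∫ u in a..b, τ u := by
      apply integral_mono_on hab (intervalIntegrable_const) (hint a b)
      intro u hu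
      exact hmono hu.1
    rw [h1] at h2
    simpa [smul_eq_mul, mul_comm] using h2
  have hhigh : ∀ a b : ℝ, a ≤ b → Λ b - Λ a ≤ τ b * (b - a) := by
    intro a b hab
    rw [hdiff]
    have h1 : ∫ _ in a..b, τ b = (b - a) • τ b := integral_const (τ b)
    have h2 : ∫ u in a..b, τ u ≤ ∫ u in a..b, τ b := by
      apply integral_mono_on hab (hint a b) (intervalIntegrable_const)
      intro u hu
      exact hmono hu.2
    rw [h1] at h2
    simpa [smul_eq_mul, mul_comm] using h2
  have hconv : ConvexOn ℝ univ Λ := by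
    rw [convexOn_iff_slope_mono_adjacent]
    refine ⟨convex_univ, ?_⟩
    intro x y z _ _ hxy hyz
    have l1 : Λ y - Λ x ≤ τ y * (y - x) := hhigh x y hxy.le
    have l2 : τ y * (z - y) ≤ Λ z - Λ y := hlow y z hyz.le
    rw [div_le_div_iff₀ (by linarith) (by linarith)]
    nlinarith [l1, l2, mul_le_mul_of_nonneg_right l1 (le_of_lt (sub_pos.mpr hyz)),
      mul_le_mul_of_nonneg_right l2 (le_of_lt (sub_pos.mpr hxy))]
  have hcont : Continuous Λ := by
    have := hconv.continuousOn isOpen_univ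
    rw [continuousOn_univ] at this
    exact this
  exact ⟨Λ, hcont, hconv, hlow⟩


lemma convexOn_of_locally {X : Type*} [NormedAddCommGroup X] [NormedSpace ℝ X]
    {A : Set X} (hAconv : Convex ℝ A) {k : X → ℝ} (hk : ContinuousOn k A)
    (hloc : ∀ a ∈ A, ∃ δ > (0:ℝ), Metric.ball a δ ⊆ A ∧ ConvexOn ℝ (Metric.ball a δ) k) :
    ConvexOn ℝ A k := by
  refine ⟨hAconv, ?_⟩
  intro x hx y hy a b ha hb hab
  set γ : ℝ → X := fun s => x + s • (y - x) with hγ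
  have hγmem : ∀ s ∈ Icc (0:ℝ) 1, γ s ∈ A := by
    intro s hs
    have : γ s = (1 - s) • x + s • y := by
      simp only [γ]; module
    rw [this]
    exact hAconv hx hy (by linarith [hs.1, hs.2]) hs.1 (by ring)
  have hγcont : Continuous γ := by continuity
  set φ : ℝ → ℝ := fun s => k (γ s) with hφ
  have hφcont : ContinuousOn φ (Icc 0 1) :=
    hk.comp hγcont.continuousOn hγmem
  set ℓ : ℝ → ℝ := fun s => φ 0 + s * (φ 1 - φ 0) with hℓ
  set ρ : ℝ → ℝ := fun s => φ s - ℓ s with hρ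
  have hρcont : ContinuousOn ρ (Icc 0 1) := by
    apply hφcont.sub
    apply ContinuousOn.add continuousOn_const
    exact (continuous_id.mul continuous_const).continuousOn
  obtain ⟨c₀, hc₀mem, hc₀max⟩ :=
    isCompact_Icc.exists_isMaxOn (nonempty_Icc.mpr zero_le_one) hρcont
  set m := ρ c₀ with hm
  set Smax : Set ℝ := {s ∈ Icc (0:ℝ) 1 | ρ s = m} with hSmax
  have hSclosed : IsClosed Smax := by
    have : Smax = Icc 0 1 ∩ ρ ⁻¹' {m} := Set.ext fun s => Iff.rfl
    rw [this]
    exact hρcont.preimage_isClosed_of_isClosed isClosed_Icc isClosed_singleton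
  have hSne : Smax.Nonempty := ⟨c₀, hc₀mem, rfl⟩
  have hSbdd : BddAbove Smax := ⟨1, fun s hs => hs.1.2⟩
  set c : ℝ := sSup Smax with hc
  have hcmem : c ∈ Smax := hSclosed.csSup_mem hSne hSbdd
  have hcIcc : c ∈ Icc (0:ℝ) 1 := hcmem.1
  have hcval : ρ c = m := hcmem.2
  have hmzero : m = 0 := by
    by_contra hmne
    have hρ0 : ρ 0 = 0 := by simp [ρ, ℓ]
    have hρ1 : ρ 1 = 0 := by simp [ρ, ℓ]
    have hc0 : c ≠ 0 := by intro h; rw [h, hρ0] at hcval; exact hmne hcval.symm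
    have hc1 : c ≠ 1 := by intro h; rw [h, hρ1] at hcval; exact hmne hcval.symm
    have hcin : 0 < c ∧ c < 1 :=
      ⟨lt_of_le_of_ne hcIcc.1 (Ne.symm hc0), lt_of_le_of_ne hcIcc.2 hc1⟩
    obtain ⟨δ, hδpos, hball, hconvball⟩ := hloc (γ c) (hγmem c hcIcc)
    set ε : ℝ := min (min c (1 - c)) (δ / (2 * (‖y - x‖ + 1))) with hε
    have hεpos : 0 < ε := by
      apply lt_min (lt_min hcin.1 (by linarith [hcin.2]))
      positivity
    have hnear : ∀ s : ℝ, |s - c| ≤ ε → γ s ∈ Metric.ball (γ c) δ := by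
      intro s hs
      rw [Metric.mem_ball, dist_eq_norm]
      have : γ s - γ c = (s - c) • (y - x) := by simp [γ]; module
      rw [this, norm_smul, Real.norm_eq_abs]
      have h1 : |s - c| ≤ δ / (2 * (‖y - x‖ + 1)) := le_trans hs (min_le_right _ _)
      have h2 : |s - c| * ‖y - x‖ ≤ δ / (2 * (‖y - x‖ + 1)) * (‖y - x‖ + 1) := by
        apply mul_le_mul h1 (by linarith) (norm_nonneg _) (by positivity)
      have h3 : δ / (2 * (‖y - x‖ + 1)) * (‖y - x‖ + 1) = δ / 2 := by
        field_simp
      rw [h3] at h2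
      linarith
    have hmem1 : γ (c - ε) ∈ Metric.ball (γ c) δ := hnear _ (by rw [abs_of_nonpos (by linarith)]; simp)
    have hmem2 : γ (c + ε) ∈ Metric.ball (γ c) δ := hnear _ (by rw [abs_of_nonneg (by linarith)]; simp)
    have hcomb : γ c = (1/2 : ℝ) • γ (c - ε) + (1/2 : ℝ) • γ (c + ε) := by
      simp only [γ]
      module
    have hkc := hconvball.2 hmem1 hmem2 (by norm_num : (0:ℝ) ≤ 1/2)
      (by norm_num : (0:ℝ) ≤ 1/2) (by norm_num : (1:ℝ)/2 + 1/2 = 1)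
    rw [← hcomb] at hkc
    simp only [smul_eq_mul] at hkc
    -- ρ midpoint inequality
    have hℓmid : ℓ c = (1/2) * ℓ (c - ε) + (1/2) * ℓ (c + ε) := by simp only [ℓ]; ring
    have hρmid : ρ c ≤ (1/2) * ρ (c - ε) + (1/2) * ρ (c + ε) := by
      simp only [ρ]
      rw [hℓmid]
      have : φ c ≤ 1/2 * φ (c - ε) + 1/2 * φ (c + ε) := hkc
      linarith
    have e1 : ε ≤ c := le_trans (min_le_left _ _) (min_le_left _ _)
    have hεc : c - ε ∈ Icc (0:ℝ) 1 := by
      constructor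
      · linarith
      · linarith [hcIcc.2, hεpos]
    have hεc2 : c + ε ∈ Icc (0:ℝ) 1 := by
      constructor
      · linarith [hcIcc.1, hεpos]
      · have h4 : ε ≤ 1 - c := le_trans (min_le_left _ _) (min_le_right _ _)
        linarith
    have hle1 : ρ (c - ε) ≤ m := hc₀max hεc
    have hlt2 : ρ (c + ε) < m := by
      rcases lt_or_eq_of_le (show ρ (c + ε) ≤ m from hc₀max hεc2) with h | h
      · exact h
      · exfalso
        have : c + ε ∈ Smax := ⟨hεc2, h⟩
        have := le_csSup hSbdd this
        linarith
    rw [hcval] at hρmid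
    have hmm : m < m := by
      calc m ≤ 1/2 * ρ (c - ε) + 1/2 * ρ (c + ε) := hρmid
      _ < 1/2 * m + 1/2 * m := by
          have t1 : 1/2 * ρ (c - ε) ≤ 1/2 * m :=
            mul_le_mul_of_nonneg_left hle1 (by norm_num)
          have t2 : 1/2 * ρ (c + ε) < 1/2 * m :=
            mul_lt_mul_of_pos_left hlt2 (by norm_num)
          exact add_lt_add_of_le_of_lt t1 t2
      _ = m := by ring
    exact lt_irrefl m hmm
  -- conclude chord inequality
  have hbIcc : b ∈ Icc (0:ℝ) 1 := ⟨hb, by linarith⟩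
  have hchord : ρ b ≤ 0 := by rw [← hmzero]; exact hc₀max hbIcc
  have hfinal : φ b ≤ (1 - b) * φ 0 + b * φ 1 := by
    simp only [ρ, ℓ] at hchord
    nlinarith [hchord]
  have hcombo : a • x + b • y = γ b := by
    simp only [γ]
    rw [show a = 1 - b by linarith]
    module
  rw [hcombo]
  have hφ0 : φ 0 = k x := by simp [φ, γ]
  have hφ1 : φ 1 = k y := by simp [φ, γ]
  calc k (γ b) = φ b := rfl
  _ ≤ (1 - b) * φ 0 + b * φ 1 := hfinal
  _ = a * k x + b * k y := by rw [hφ0, hφ1, show a = 1 - b by linarith]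


section Aux
variable {X Y Z : Type*} [NormedAddCommGroup X] [NormedSpace ℝ X]
  [NormedAddCommGroup Y] [NormedSpace ℝ Y]
  [NormedAddCommGroup Z] [NormedSpace ℝ Z]

set_option maxHeartbeats 1000000 in
theorem main_assembly
    (A : Set X) (hAopen : IsOpen A) (hAconv : Convex ℝ A)
    (F : X → Y) (hFcont : ContinuousOn F A)
    (f : X → ℝ) (hfcont : ContinuousOn f A) (hfnonneg : ∀ x ∈ A, 0 ≤ f x)
    (hFdef : ∀ x1 ∈ A, ∀ x2 ∈ A, ∀ a b : ℝ, 0 ≤ a → 0 ≤ b → a + b = 1 →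
      ‖F (a • x1 + b • x2) - (a • F x1 + b • F x2)‖
        ≤ a * f x1 + b * f x2 - f (a • x1 + b • x2))
    (G : Y → Z) (hGcont : Continuous G)
    (g : Y → ℝ) (hgcont : Continuous g)
    (hGdef : ∀ (y1 y2 : Y) (a b : ℝ), 0 ≤ a → 0 ≤ b → a + b = 1 →
      ‖G (a • y1 + b • y2) - (a • G y1 + b • G y2)‖
        ≤ a * g y1 + b * g y2 - g (a • y1 + b • y2))
    (EG Eg : ℕ → ℝ) (hEGnonneg : ∀ n, 0 ≤ EG n) (hEgnonneg : ∀ n, 0 ≤ Eg n)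
    (hEG : ∀ (n : ℕ) (y1 y2 : Y), ‖y1‖ ≤ (n:ℝ) → ‖y2‖ ≤ (n:ℝ) →
      ‖G y1 - G y2‖ ≤ EG n * ‖y1 - y2‖)
    (hEg : ∀ (n : ℕ) (y1 y2 : Y), ‖y1‖ ≤ (n:ℝ) → ‖y2‖ ≤ (n:ℝ) →
      g y1 - g y2 ≤ Eg n * ‖y1 - y2‖) :
    ∃ h : X → ℝ, ContinuousOn h A ∧
      ∀ ψ : Z →L[ℝ] ℝ, ‖ψ‖ ≤ 1 → ConvexOn ℝ A (fun x => ψ (G (F x)) + h x) := by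
  classical
  -- monotone running max of E n := EG n + Eg n
  set E : ℕ → ℝ := fun n => EG n + Eg n with hE
  set K' : ℕ → ℝ := fun n => Nat.rec (E 0) (fun k ih => max ih (E (k+1))) n with hK'
  have hK'succ : ∀ n, K' (n+1) = max (K' n) (E (n+1)) := fun n => rfl
  have hK'mono : Monotone K' := by
    apply monotone_nat_of_le_succ
    intro n
    rw [hK'succ]
    exact le_max_left _ _
  have hK'ge : ∀ n, E n ≤ K' n := by
    intro n
    cases n with
    | zero => exact le_refl _
    | succ k => rw [hK'succ]; exact le_max_right _ _
  set τ : ℝ → ℝ := fun s => K' (⌈s⌉₊ + 2) with hτ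
  have hτmono : Monotone τ := by
    intro s t hst
    exact hK'mono (Nat.add_le_add_right (Nat.ceil_mono hst) 2)
  obtain ⟨Λ, hΛcont, hΛconv, hΛslope⟩ := lambda_pack τ hτmono
  set q : X → ℝ := fun x => ‖F x‖ + 2 * f x with hq
  have hqcont : ContinuousOn q A := by
    apply ContinuousOn.add (hFcont.norm)
    exact continuousOn_const.mul hfcont
  set h : X → ℝ := fun x => g (F x) + Λ (q x) with hh
  have hcont : ContinuousOn h A := by
    apply ContinuousOn.add
    · exact hgcont.comp_continuousOn hFcont
    · exact hΛcont.comp_continuousOn hqcont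
  refine ⟨h, hcont, fun ψ hψ => ?_⟩
  have hψle : ∀ z : Z, ψ z ≤ ‖z‖ := by
    intro z
    calc ψ z ≤ |ψ z| := le_abs_self _
    _ = ‖ψ z‖ := (Real.norm_eq_abs _).symm
    _ ≤ ‖ψ‖ * ‖z‖ := ψ.le_opNorm _
    _ ≤ 1 * ‖z‖ := mul_le_mul_of_nonneg_right hψ (norm_nonneg _)
    _ = ‖z‖ := one_mul _
  -- continuity of the target function
  have htarget_cont : ContinuousOn (fun x => ψ (G (F x)) + h x) A := by
    apply ContinuousOn.add _ hcont
    exact (ψ.continuous.comp hGcont).comp_continuousOn hFcont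
  -- local convexity
  apply convexOn_of_locally hAconv htarget_cont
  intro a ha
  obtain ⟨δ₁, hδ₁pos, hδ₁⟩ := Metric.isOpen_iff.mp hAopen a ha
  have hFca : ContinuousAt F a := hFcont.continuousAt (hAopen.mem_nhds ha)
  obtain ⟨δ₂, hδ₂pos, hδ₂⟩ := Metric.continuousAt_iff.mp hFca (ε := 1) one_pos
  set δ := min δ₁ δ₂ with hδ
  have hδpos : 0 < δ := lt_min hδ₁pos hδ₂pos
  have hballA : Metric.ball a δ ⊆ A :=
    subset_trans (Metric.ball_subset_ball (min_le_left _ _)) hδ₁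
  have hballF : ∀ x ∈ Metric.ball a δ, ‖F x - F a‖ < 1 := by
    intro x hx
    have : dist x a < δ₂ := lt_of_lt_of_le (Metric.mem_ball.mp hx) (min_le_right _ _)
    have := hδ₂ this
    rwa [dist_eq_norm] at this
  refine ⟨δ, hδpos, hballA, convex_ball a δ, ?_⟩
  intro x1 hx1 x2 hx2 a' b' ha' hb' hab'
  simp only [smul_eq_mul]
  set xt := a' • x1 + b' • x2 with hxt
  have hxtball : xt ∈ Metric.ball a δ := (convex_ball a δ) hx1 hx2 ha' hb' hab'
  have hx1A : x1 ∈ A := hballA hx1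
  have hx2A : x2 ∈ A := hballA hx2
  have hxtA : xt ∈ A := hballA hxtball
  set u : Y := F xt with hu
  set w : Y := a' • F x1 + b' • F x2 with hw
  set Df : ℝ := a' * f x1 + b' * f x2 - f xt with hDf
  have huw : ‖u - w‖ ≤ Df := hFdef x1 hx1A x2 hx2A a' b' ha' hb' hab'
  have hDf0 : 0 ≤ Df := le_trans (norm_nonneg _) huw
  -- norm bounds
  have hF1 : ‖F x1‖ ≤ ‖F a‖ + 1 := by
    have := hballF x1 hx1
    have h2 := norm_sub_norm_le (F x1) (F a)
    linarith
  have hF2 : ‖F x2‖ ≤ ‖F a‖ + 1 := by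
    have := hballF x2 hx2
    have h2 := norm_sub_norm_le (F x2) (F a)
    linarith
  have hFa : ‖F a‖ ≤ ‖F xt‖ + 1 := by
    have := hballF xt hxtball
    have h2 := norm_sub_norm_le (F a) (F xt)
    rw [norm_sub_rev] at this
    linarith
  have hwnorm : ‖w‖ ≤ ‖F xt‖ + 2 := by
    calc ‖w‖ ≤ ‖a' • F x1‖ + ‖b' • F x2‖ := norm_add_le _ _
    _ = a' * ‖F x1‖ + b' * ‖F x2‖ := by
        rw [norm_smul, norm_smul, Real.norm_eq_abs, Real.norm_eq_abs,
          abs_of_nonneg ha', abs_of_nonneg hb']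
    _ ≤ a' * (‖F a‖ + 1) + b' * (‖F a‖ + 1) := by
        apply add_le_add (mul_le_mul_of_nonneg_left hF1 ha')
          (mul_le_mul_of_nonneg_left hF2 hb')
    _ = ‖F a‖ + 1 := by rw [← add_mul, hab', one_mul]
    _ ≤ ‖F xt‖ + 2 := by linarith
  -- the radius
  set n : ℕ := ⌈q xt⌉₊ + 2 with hn
  have hqxt : ‖F xt‖ ≤ q xt := by
    have := hfnonneg xt hxtA
    simp only [q]; linarith
  have hqceil : q xt ≤ (⌈q xt⌉₊ : ℝ) := Nat.le_ceil _
  have hnbig : ‖F xt‖ + 2 ≤ (n : ℝ) := by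
    have : (n : ℝ) = (⌈q xt⌉₊ : ℝ) + 2 := by push_cast [hn]; ring
    rw [this]; linarith
  have hunorm' : ‖u‖ ≤ (n : ℝ) := by
    simp only [hu]; linarith
  have hwnorm' : ‖w‖ ≤ (n : ℝ) := by linarith
  -- Lipschitz estimates
  have hGuw : ‖G u - G w‖ ≤ EG n * Df := by
    calc ‖G u - G w‖ ≤ EG n * ‖u - w‖ := hEG n u w hunorm' hwnorm'
    _ ≤ EG n * Df := mul_le_mul_of_nonneg_left huw (hEGnonneg n)
  have hguw : g u - g w ≤ Eg n * Df := by
    calc g u - g w ≤ Eg n * ‖u - w‖ := hEg n u w hunorm' hwnorm'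
    _ ≤ Eg n * Df := mul_le_mul_of_nonneg_left huw (hEgnonneg n)
  -- G defect at y-level
  have hGw : ‖G w - (a' • G (F x1) + b' • G (F x2))‖
      ≤ a' * g (F x1) + b' * g (F x2) - g w :=
    hGdef (F x1) (F x2) a' b' ha' hb' hab'
  -- q defect
  have hDq : Df ≤ a' * q x1 + b' * q x2 - q xt := by
    have hFt : ‖F xt‖ ≤ Df + (a' * ‖F x1‖ + b' * ‖F x2‖) := by
      calc ‖F xt‖ = ‖(u - w) + w‖ := by rw [sub_add_cancel]
      _ ≤ ‖u - w‖ + ‖w‖ := norm_add_le _ _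
      _ ≤ Df + (a' * ‖F x1‖ + b' * ‖F x2‖) := by
          apply add_le_add huw
          calc ‖w‖ ≤ ‖a' • F x1‖ + ‖b' • F x2‖ := norm_add_le _ _
          _ = a' * ‖F x1‖ + b' * ‖F x2‖ := by
              rw [norm_smul, norm_smul, Real.norm_eq_abs, Real.norm_eq_abs,
                abs_of_nonneg ha', abs_of_nonneg hb']
    simp only [q, Df] at *
    linarith
  -- Λ part
  have hΛpart : τ (q xt) * Df ≤ a' * Λ (q x1) + b' * Λ (q x2) - Λ (q xt) := by
    have hcombo : Λ (a' * q x1 + b' * q x2) ≤ a' * Λ (q x1) + b' * Λ (q x2) := by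
      have := hΛconv.2 (mem_univ (q x1)) (mem_univ (q x2)) ha' hb' hab'
      simpa [smul_eq_mul] using this
    have hslope := hΛslope (q xt) (a' * q x1 + b' * q x2) (by linarith)
    have hτE : E n ≤ τ (q xt) := hK'ge n
    have hτ0 : 0 ≤ τ (q xt) :=
      le_trans (add_nonneg (hEGnonneg n) (hEgnonneg n)) hτE
    have hmul : τ (q xt) * Df ≤ τ (q xt) * (a' * q x1 + b' * q x2 - q xt) :=
      mul_le_mul_of_nonneg_left hDq hτ0
    linarith
  -- final combination
  have hτE : E n ≤ τ (q xt) := hK'ge n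
  have hEDf : E n * Df ≤ τ (q xt) * Df := mul_le_mul_of_nonneg_right hτE hDf0
  set v : Z := a' • G (F x1) + b' • G (F x2) with hv
  have hψv : ψ (G (F xt)) - (a' * ψ (G (F x1)) + b' * ψ (G (F x2))) ≤ ‖G (F xt) - v‖ := by
    have : ψ (G (F xt) - v) = ψ (G (F xt)) - (a' * ψ (G (F x1)) + b' * ψ (G (F x2))) := by
      simp [map_sub, map_add, map_smul, smul_eq_mul, hv]
    linarith [hψle (G (F xt) - v), this.symm.le]
  have hGFv : ‖G (F xt) - v‖ ≤ E n * Df + (a' * g (F x1) + b' * g (F x2) - g (F xt)) := by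
    calc ‖G (F xt) - v‖ = ‖(G u - G w) + (G w - v)‖ := by simp only [hu]; abel_nf
    _ ≤ ‖G u - G w‖ + ‖G w - v‖ := norm_add_le _ _
    _ ≤ EG n * Df + (a' * g (F x1) + b' * g (F x2) - g w) := add_le_add hGuw hGw
    _ ≤ E n * Df + (a' * g (F x1) + b' * g (F x2) - g (F xt)) := by
        simp only [E]
        have : g (F xt) - g w ≤ Eg n * Df := hguw
        nlinarith [this]
  -- put together
  simp only [h]
  have expand : a' * (ψ (G (F x1)) + (g (F x1) + Λ (q x1)))
      + b' * (ψ (G (F x2)) + (g (F x2) + Λ (q x2)))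
      = (a' * ψ (G (F x1)) + b' * ψ (G (F x2)))
        + (a' * g (F x1) + b' * g (F x2))
        + (a' * Λ (q x1) + b' * Λ (q x2)) := by ring
  rw [expand]
  linarith [hψv, hGFv, hΛpart, hEDf]
end Aux

theorem dc_comp_wrap {X Y Z : Type*}
    [NormedAddCommGroup X] [NormedSpace ℝ X]
    [NormedAddCommGroup Y] [NormedSpace ℝ Y]
    [NormedAddCommGroup Z] [NormedSpace ℝ Z]
    (A : Set X) (hAopen : IsOpen A) (hAconv : Convex ℝ A)
    (F : X → Y)
    (hFcont : ContinuousOn F A) (f₀ : X → ℝ) (hf₀cont : ContinuousOn f₀ A)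
    (hf₀ctrl : ∀ φ : Y →L[ℝ] ℝ, ‖φ‖ ≤ 1 → ConvexOn ℝ A (fun x => φ (F x) + f₀ x))
    (G : Y → Z) (hGcont : Continuous G)
    (g : Y → ℝ) (hgcontOn : ContinuousOn g Set.univ)
    (hgctrl : ∀ φ : Z →L[ℝ] ℝ, ‖φ‖ ≤ 1 → ConvexOn ℝ Set.univ (fun y => φ (G y) + g y))
    (hgbdd : ∀ S : Set Y, Bornology.IsBounded S → ∃ M : ℝ, ∀ y ∈ S, |g y| ≤ M) :
    ContinuousOn (G ∘ F) A ∧ ∃ h : X → ℝ, ContinuousOn h A ∧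
      ∀ φ : Z →L[ℝ] ℝ, ‖φ‖ ≤ 1 → ConvexOn ℝ A (fun x => φ ((G ∘ F) x) + h x) := by
  classical
  have hgcont : Continuous g := continuousOn_univ.mp hgcontOn
  refine ⟨hGcont.comp_continuousOn hFcont, ?_⟩
  rcases A.eq_empty_or_nonempty with rfl | ⟨a₀, ha₀⟩
  · refine ⟨0, continuousOn_empty _, fun φ _ => ⟨convex_empty, ?_⟩⟩
    intro x hx
    exact absurd hx (Set.notMem_empty x)
  -- normalize f ≥ 0
  have hf₀conv : ConvexOn ℝ A (fun x => f₀ x) := by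
    have := hf₀ctrl 0 (by simp)
    simpa using this
  obtain ⟨φa, ca, hφa⟩ := exists_affine_minorant hAopen hf₀conv hf₀cont ha₀
  set f : X → ℝ := fun x => f₀ x - (φa x + ca) with hf
  have hfcont : ContinuousOn f A :=
    hf₀cont.sub ((φa.continuous.continuousOn).add continuousOn_const)
  have hfnonneg : ∀ x ∈ A, 0 ≤ f x := fun x hx => sub_nonneg.2 (hφa x hx)
  have haff : ConvexOn ℝ A (fun x => -(φa x + ca)) := by
    refine ⟨hAconv, fun x hx y hy a b ha hb hab => le_of_eq ?_⟩
    simp only [map_add, map_smul, smul_eq_mul]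
    have hca : a * ca + b * ca = ca := by rw [← add_mul, hab, one_mul]
    ring_nf
    linarith [hca]
  have hfctrl : ∀ ψ : Y →L[ℝ] ℝ, ‖ψ‖ ≤ 1 → ConvexOn ℝ A (fun x => ψ (F x) + f x) := by
    intro ψ hψ
    have h2 : (fun x => ψ (F x) + f x)
        = fun x => (ψ (F x) + f₀ x) + (-(φa x + ca)) := by
      funext x; simp only [f]; ring
    rw [h2]
    exact (hf₀ctrl ψ hψ).add haff
  have hFdef : ∀ x1 ∈ A, ∀ x2 ∈ A, ∀ a b : ℝ, 0 ≤ a → 0 ≤ b → a + b = 1 →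
      ‖F (a • x1 + b • x2) - (a • F x1 + b • F x2)‖
        ≤ a * f x1 + b * f x2 - f (a • x1 + b • x2) :=
    fun x1 h1 x2 h2 a b ha hb hab => ctrl_defect hfctrl h1 h2 ha hb hab
  have hGdef : ∀ (y1 y2 : Y) (a b : ℝ), 0 ≤ a → 0 ≤ b → a + b = 1 →
      ‖G (a • y1 + b • y2) - (a • G y1 + b • G y2)‖
        ≤ a * g y1 + b * g y2 - g (a • y1 + b • y2) :=
    fun y1 y2 a b ha hb hab =>
      ctrl_defect hgctrl (Set.mem_univ y1) (Set.mem_univ y2) ha hb hab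
  -- bounds on balls
  choose Mg hMg using fun n : ℕ =>
    hgbdd (Metric.closedBall 0 (n:ℝ)) Metric.isBounded_closedBall
  have hMg' : ∀ (n : ℕ) (y : Y), ‖y‖ ≤ (n:ℝ) → |g y| ≤ Mg n := by
    intro n y hy
    exact hMg n y (by simpa [Metric.mem_closedBall, dist_zero_right] using hy)
  choose BG hBG using fun n : ℕ =>
    G_bounded_on_ball hGcont hGdef (Nat.cast_nonneg n) (hMg' n)
  have hgconv : ConvexOn ℝ Set.univ g := by
    have := hgctrl 0 (by simp)
    simpa using this
  have hMgnonneg : ∀ n : ℕ, 0 ≤ Mg n :=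
    fun n => le_trans (abs_nonneg _) (hMg' n 0 (by simp))
  have hBGnonneg : ∀ n : ℕ, 0 ≤ BG n :=
    fun n => le_trans (norm_nonneg _) (hBG n 0 (by simp))
  set EG : ℕ → ℝ := fun n => 2 * BG (n+1) + 4 * Mg (n+1) with hEGdef
  set Eg : ℕ → ℝ := fun n => 2 * Mg (n+1) with hEgdef
  have hEGnonneg : ∀ n, 0 ≤ EG n := by
    intro n; simp only [EG]; linarith [hBGnonneg (n+1), hMgnonneg (n+1)]
  have hEgnonneg : ∀ n, 0 ≤ Eg n := by
    intro n; simp only [Eg]; linarith [hMgnonneg (n+1)]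
  have hcast : ∀ n : ℕ, ((n:ℝ) + 1) = ((n+1 : ℕ) : ℝ) := by intro n; push_cast; ring
  have hEG : ∀ (n : ℕ) (y1 y2 : Y), ‖y1‖ ≤ (n:ℝ) → ‖y2‖ ≤ (n:ℝ) →
      ‖G y1 - G y2‖ ≤ EG n * ‖y1 - y2‖ := by
    intro n y1 y2 h1 h2
    have hBG' : ∀ y : Y, ‖y‖ ≤ (n:ℝ) + 1 → ‖G y‖ ≤ BG (n+1) := by
      intro y hy; exact hBG (n+1) y (by rw [← hcast n]; exact hy)
    have hM' : ∀ y : Y, ‖y‖ ≤ (n:ℝ) + 1 → |g y| ≤ Mg (n+1) := by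
      intro y hy; exact hMg' (n+1) y (by rw [← hcast n]; exact hy)
    exact G_lip hgctrl hBG' hM' y1 y2 h1 h2
  have hEg : ∀ (n : ℕ) (y1 y2 : Y), ‖y1‖ ≤ (n:ℝ) → ‖y2‖ ≤ (n:ℝ) →
      g y1 - g y2 ≤ Eg n * ‖y1 - y2‖ := by
    intro n y1 y2 h1 h2
    have hM' : ∀ y : Y, ‖y‖ ≤ (n:ℝ) + 1 → |g y| ≤ Mg (n+1) := by
      intro y hy; exact hMg' (n+1) y (by rw [← hcast n]; exact hy)
    exact convex_bdd_lip hgconv hM' y1 y2 h1 h2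
  obtain ⟨h, hcont, hctrl⟩ := main_assembly A hAopen hAconv F hFcont f hfcont hfnonneg
    hFdef G hGcont g hgcont hGdef EG Eg hEGnonneg hEgnonneg hEG hEg
  exact ⟨h, hcont, fun φ hφ => hctrl φ hφ⟩

/-- If `F : A → Y` is d.c. on the open convex set `A` and `G : Y → Z`
is d.c. with a control function bounded on bounded sets, then `G ∘ F` is d.c. on `A`. -/
theorem dc_comp_control_bounded_on_bounded {X Y Z : Type*}
    [NormedAddCommGroup X] [NormedSpace ℝ X]
    [NormedAddCommGroup Y] [NormedSpace ℝ Y]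
    [NormedAddCommGroup Z] [NormedSpace ℝ Z]
    (A : Set X) (hAopen : IsOpen A) (hAconv : Convex ℝ A)
    (F : X → Y) (hF : IsDCOn A F)
    (G : Y → Z) (hGcont : Continuous G)
    (g : Y → ℝ) (hg : IsControlOn (Set.univ) G g)
    (hgbdd : ∀ S : Set Y, IsBounded S → ∃ M : ℝ, ∀ y ∈ S, |g y| ≤ M) :
    IsDCOn A (G ∘ F) := by
  obtain ⟨hFcont, f₀, hf₀cont, hf₀ctrl⟩ := hF
  obtain ⟨hgcontOn, hgctrl⟩ := hg
  exact dc_comp_wrap A hAopen hAconv F hFcont f₀ hf₀cont hf₀ctrl G hGcont g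
    hgcontOn hgctrl hgbdd
end

section
/- Let X be a reflexive real Banach space, C ⊆ X an open convex set, f : C → ℝ a continuous convex function, and I ⊆ ℝ an open interval containing f(C). Then for every real normed linear space Z and every d.c. mapping G : I → Z, the composed map G ∘ f is d.c. on C. -/
open Set Metric Bornology Filter NNReal

private lemma dc_amhm {a b la mu : ℝ} (ha : 0 < a) (hb : 0 < b) (hla : 0 ≤ la) (hmu : 0 ≤ mu)
    (hlm : la + mu = 1) : (la * a + mu * b)⁻¹ ≤ la * a⁻¹ + mu * b⁻¹ := by
  have hD : 0 < la * a + mu * b := by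
    rcases eq_or_lt_of_le hla with rfl | h
    · have hmu' : 0 < mu := by linarith
      nlinarith [mul_pos hmu' hb]
    · nlinarith [mul_nonneg hmu hb.le]
  have he : la * a⁻¹ + mu * b⁻¹ = (la * b + mu * a) / (a * b) := by
    field_simp
  rw [inv_eq_one_div, he, div_le_div_iff₀ hD (mul_pos ha hb)]
  have key : (la * b + mu * a) * (la * a + mu * b) - a * b = la * mu * (a - b) ^ 2 := by
    linear_combination (a * b * (la + mu + 1)) * hlm
  nlinarith [key, mul_nonneg (mul_nonneg hla hmu) (sq_nonneg (a - b))]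

/-- Construction of a continuous nondecreasing convex function dominating prescribed
values on an integer grid. -/
private lemma dc_exists_convex_majorant (B : ℕ → ℝ) :
    ∃ A : ℝ → ℝ, ConvexOn ℝ univ A ∧ Monotone A ∧ Continuous A ∧
      ∀ (n : ℕ) (r : ℝ), 1 + n ≤ r → B (n + 1) ≤ A r := by
  classical
  -- pair recursion: (w n, δ n)
  let P : ℕ → ℝ × ℝ := fun n =>
    Nat.rec (B 1, max 0 (B 2 - B 1))
      (fun n p => (p.1 + p.2, max p.2 (B (n + 3) - (p.1 + p.2)))) n
  let w : ℕ → ℝ := fun n => (P n).1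
  let δ : ℕ → ℝ := fun n => (P n).2
  have hw0 : w 0 = B 1 := rfl
  have hwsucc : ∀ n, w (n + 1) = w n + δ n := fun n => rfl
  have hδsucc : ∀ n, δ (n + 1) = max (δ n) (B (n + 3) - (w n + δ n)) := fun n => rfl
  have hδmono : Monotone δ := monotone_nat_of_le_succ fun n => by rw [hδsucc]; exact le_max_left _ _
  have hδnn : ∀ n, 0 ≤ δ n := by
    intro n
    induction n with
    | zero => exact le_max_left _ _
    | succ m ih => exact ih.trans (hδmono (Nat.le_succ m))
  have hδlb : ∀ n, B (n + 2) - w n ≤ δ n := by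
    intro n
    cases n with
    | zero => rw [hw0]; exact le_max_right _ _
    | succ m => rw [hδsucc, hwsucc]; exact le_max_right _ _
  have hwB : ∀ n, B (n + 1) ≤ w n := by
    intro n
    cases n with
    | zero => exact le_of_eq hw0.symm
    | succ m =>
      rw [hwsucc]
      have := hδlb m
      linarith
  -- the affine pieces
  let L : ℕ → ℝ → ℝ := fun n r => w n + δ n * (r - 1 - n)
  have hLmono : ∀ n, Monotone (L n) := by
    intro n r r' h
    simp only [L]
    nlinarith [hδnn n]
  have hD1 : ∀ m n : ℕ, m ≤ n → ∀ r : ℝ, 1 + n ≤ r → L m r ≤ L n r := by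
    intro m n hmn
    induction n with
    | zero => intro r _; interval_cases m; exact le_rfl
    | succ k ih =>
      intro r hr
      rcases Nat.lt_or_ge m (k+1) with h | h
      · have h1 : L m r ≤ L k r := by
          apply ih (Nat.lt_succ_iff.1 h)
          have : ((k:ℝ)) ≤ (k:ℝ) + 1 := by linarith
          push_cast at hr ⊢
          linarith
        refine h1.trans ?_
        have hd := hδmono (Nat.le_succ k)
        simp only [L, hwsucc]
        push_cast at hr ⊢
        nlinarith [hδnn k]
      · have : m = k + 1 := le_antisymm hmn h
        subst this; exact le_rfl
  have hD2 : ∀ m n : ℕ, m ≤ n → ∀ r : ℝ, r ≤ 1 + m → L n r ≤ L m r := by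
    intro m n hmn
    induction n with
    | zero => intro r _; interval_cases m; exact le_rfl
    | succ k ih =>
      intro r hr
      rcases Nat.lt_or_ge m (k+1) with h | h
      · have hmk : m ≤ k := Nat.lt_succ_iff.1 h
        refine le_trans ?_ (ih hmk r hr)
        have hd := hδmono (Nat.le_succ k)
        have hmk' : (m:ℝ) ≤ (k:ℝ) := by exact_mod_cast hmk
        simp only [L, hwsucc]
        push_cast at hr ⊢
        nlinarith [hδnn k]
      · have : m = k + 1 := le_antisymm hmn h
        subst this; exact le_rfl
  have hBdd : ∀ r : ℝ, BddAbove (range fun n => L n r) := by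
    intro r
    set N : ℕ := ⌊max (r - 1) 0⌋₊ with hN
    have hN1 : (N : ℝ) ≤ max (r - 1) 0 := Nat.floor_le (le_max_right _ _)
    have hN2 : max (r - 1) 0 < N + 1 := Nat.lt_floor_add_one _
    refine ⟨max (L N r) (L (N + 1) r), ?_⟩
    rintro b ⟨n, rfl⟩
    rcases le_or_gt n N with h | h
    · rcases le_or_gt 1 r with h1 | h1
      · refine le_max_of_le_left (hD1 n N h r ?_)
        have hm : max (r - 1) 0 = r - 1 := max_eq_left (by linarith)
        rw [hm] at hN1
        linarith
      · have hN0 : N = 0 := by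
          have hmx : max (r - 1) 0 = 0 := by
            apply max_eq_right; linarith
          simp [hN, hmx]
        have hn0 : n = 0 := by omega
        refine le_max_of_le_left ?_
        rw [hn0, hN0]
    · refine le_max_of_le_right (hD2 (N + 1) n h r ?_)
      have : r - 1 ≤ max (r - 1) 0 := le_max_left _ _
      push_cast
      linarith
  let A : ℝ → ℝ := fun r => ⨆ n, L n r
  have hAL : ∀ (n : ℕ) (r : ℝ), L n r ≤ A r := fun n r => le_ciSup (hBdd r) n
  have hAmono : Monotone A := by
    intro r r' h
    exact ciSup_le fun n => (hLmono n h).trans (hAL n r')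
  have hAconv : ConvexOn ℝ univ A := by
    refine ⟨convex_univ, ?_⟩
    intro x _ y _ a b ha hb hab
    refine ciSup_le fun n => ?_
    have he : L n (a • x + b • y) = a * L n x + b * L n y := by
      simp only [L, smul_eq_mul]
      linear_combination (w n - δ n * (1 + (n:ℝ))) * hab.symm
    rw [he]
    have h1 := hAL n x
    have h2 := hAL n y
    have := add_le_add (mul_le_mul_of_nonneg_left h1 ha) (mul_le_mul_of_nonneg_left h2 hb)
    simpa [smul_eq_mul] using this
  have hAcont : Continuous A := by
    have := hAconv.continuousOn isOpen_univ
    exact continuousOn_univ.mp this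
  refine ⟨A, hAconv, hAmono, hAcont, ?_⟩
  intro n r hr
  refine (hwB n).trans (le_trans ?_ (hAL n r))
  simp only [L]
  nlinarith [hδnn n]

private lemma dc_reflexive_exists_min {X : Type*} [NormedAddCommGroup X] [NormedSpace ℝ X]
    (hrefl : Function.Surjective (NormedSpace.inclusionInDoubleDual ℝ X))
    {K : Set X} (hne : K.Nonempty) (hcl : IsClosed K) (hbd : IsBounded K)
    {f : X → ℝ} (hf : ContinuousOn f K) (hfc : ConvexOn ℝ K f) :
    ∃ x₀ ∈ K, ∀ x ∈ K, f x₀ ≤ f x := by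
  classical
  obtain ⟨R, hR⟩ := hbd.subset_closedBall 0
  set J := NormedSpace.inclusionInDoubleDual ℝ X with hJ
  set Φ : X → WeakDual ℝ (StrongDual ℝ X) :=
    fun x => StrongDual.toWeakDual (J x) with hΦ
  set S : ℝ → Set X := fun c => {y ∈ K | f y ≤ c} with hS
  have hSconv : ∀ c, Convex ℝ (S c) := fun c => hfc.convex_le c
  have hScl : ∀ c, IsClosed (S c) := by
    intro c
    have : S c = K ∩ f ⁻¹' Iic c := by
      ext y; simp [hS, Set.mem_sep_iff, Set.mem_inter_iff]
    rw [this]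
    exact hf.preimage_isClosed_of_isClosed hcl isClosed_Iic
  have hSmono : ∀ c c' : ℝ, c ≤ c' → S c ⊆ S c' := by
    intro c c' h y hy
    exact ⟨hy.1, hy.2.trans h⟩
  -- the compact ball in the weak-star bidual
  set Bset : Set (WeakDual ℝ (StrongDual ℝ X)) :=
    WeakDual.toStrongDual ⁻¹' closedBall 0 R with hBset
  have hBcpt : IsCompact Bset := WeakDual.isCompact_closedBall 0 R
  have hBclosed : IsClosed Bset := hBcpt.isClosed
  have hΦmem : ∀ x ∈ K, Φ x ∈ Bset := by
    intro x hx
    have h1 : ‖J x‖ ≤ ‖x‖ := NormedSpace.double_dual_bound ℝ X x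
    have h2 : ‖x‖ ≤ R := by
      have := hR hx; rwa [mem_closedBall_zero_iff] at this
    simp only [hBset, Set.mem_preimage, mem_closedBall_zero_iff]
    exact (mem_closedBall_zero_iff (a := WeakDual.toStrongDual (Φ x))).2 (le_trans h1 h2)
  haveI : Nonempty K := hne.to_subtype
  set T : K → Set (WeakDual ℝ (StrongDual ℝ X)) :=
    fun x => closure (Φ '' S (f x.1)) with hT
  have hTsub : ∀ x, T x ⊆ Bset :=
    fun x => closure_minimal (fun w ⟨y, hy, hyw⟩ => hyw ▸ hΦmem y hy.1) hBclosed
  have hTcpt : ∀ x, IsCompact (T x) := fun x => hBcpt.of_isClosed_subset isClosed_closure (hTsub x)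
  have hTne : ∀ x, (T x).Nonempty :=
    fun x => ⟨Φ x.1, subset_closure (Set.mem_image_of_mem _ ⟨x.2, le_refl _⟩)⟩
  have hTdir : Directed (· ⊇ ·) T := by
    intro x y
    rcases le_total (f x.1) (f y.1) with h | h
    · exact ⟨x, subset_rfl, closure_mono (Set.image_mono (hSmono _ _ h))⟩
    · exact ⟨y, closure_mono (Set.image_mono (hSmono _ _ h)), subset_rfl⟩
  obtain ⟨z, hz⟩ := IsCompact.nonempty_iInter_of_directed_nonempty_isCompact_isClosed
    T hTdir hTne hTcpt (fun _ => isClosed_closure)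
  obtain ⟨x₀, hx₀⟩ := hrefl (WeakDual.toStrongDual z)
  have key : ∀ x : K, x₀ ∈ S (f x.1) := by
    intro x
    by_contra hmem
    obtain ⟨ψ, v, hv1, hv2⟩ :=
      geometric_hahn_banach_closed_point (hSconv (f x.1)) (hScl (f x.1)) hmem
    have hzT : z ∈ T x := Set.mem_iInter.1 hz x
    have hev : Continuous fun w : WeakDual ℝ (StrongDual ℝ X) => w ψ :=
      WeakDual.eval_continuous ψ
    have hcl' : z ψ ∈ closure (Iic v) := by
      refine map_mem_closure (f := fun w : WeakDual ℝ (StrongDual ℝ X) => w ψ) hev hzT ?_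
      rintro w ⟨y, hy, rfl⟩
      exact (hv1 y hy).le
    rw [isClosed_Iic.closure_eq] at hcl'
    have hzψ : z ψ = ψ x₀ := by
      have h1 : J x₀ ψ = ψ x₀ := rfl
      have h2 : J x₀ ψ = (WeakDual.toStrongDual z) ψ := by rw [hx₀]
      have h3 : (WeakDual.toStrongDual z) ψ = z ψ := rfl
      rw [← h1, h2, h3]
    rw [hzψ] at hcl'
    exact absurd (lt_of_lt_of_le hv2 hcl') (lt_irrefl _)
  obtain ⟨xw, hxw⟩ := hne
  refine ⟨x₀, (key ⟨xw, hxw⟩).1, fun x hx => (key ⟨x, hx⟩).2⟩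

private lemma dc_amhm' {a b la mu : ℝ} (ha : 0 < a) (hb : 0 < b) (hla : 0 ≤ la) (hmu : 0 ≤ mu)
    (hlm : la + mu = 1) : (la * a + mu * b)⁻¹ ≤ la * a⁻¹ + mu * b⁻¹ := by
  have hD : 0 < la * a + mu * b := by
    rcases eq_or_lt_of_le hla with rfl | h
    · have hmu' : 0 < mu := by linarith
      nlinarith [mul_pos hmu' hb]
    · nlinarith [mul_nonneg hmu hb.le]
  have he : la * a⁻¹ + mu * b⁻¹ = (la * b + mu * a) / (a * b) := by
    field_simp
  rw [inv_eq_one_div, he, div_le_div_iff₀ hD (mul_pos ha hb)]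
  have key : (la * b + mu * a) * (la * a + mu * b) - a * b = la * mu * (a - b) ^ 2 := by
    linear_combination (a * b * (la + mu + 1)) * hlm
  nlinarith [key, mul_nonneg (mul_nonneg hla hmu) (sq_nonneg (a - b))]

private lemma dc_pos_combo {p q a b : ℝ} (hp : 0 < p) (hq : 0 < q) (ha : 0 ≤ a) (hb : 0 ≤ b)
    (hab : a + b = 1) : 0 < a * p + b * q := by
  rcases eq_or_lt_of_le ha with rfl | h
  · have hb' : 0 < b := by linarith
    nlinarith [mul_pos hb' hq]
  · nlinarith [mul_nonneg hb hq.le]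

private lemma dc_contOn_max {X : Type*} [TopologicalSpace X] {s : Set X} {f g : X → ℝ}
    (hf : ContinuousOn f s) (hg : ContinuousOn g s) :
    ContinuousOn (fun x => max (f x) (g x)) s :=
  hf.sup hg

private lemma dc_exists_gauge {X : Type*} [NormedAddCommGroup X] [NormedSpace ℝ X]
    {C : Set X} (hCopen : IsOpen C) (hCconv : Convex ℝ C) :
    ∃ ρ : X → ℝ, ContinuousOn ρ C ∧ ConvexOn ℝ C ρ ∧ (∀ x, 1 ≤ ρ x) ∧ (∀ x, ‖x‖ ≤ ρ x) ∧
      ∀ r : ℝ, 1 ≤ r → IsClosed {x ∈ C | ρ x ≤ r} := by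
  classical
  set dC : X → ℝ := fun x => infDist x Cᶜ with hdC
  set ρ : X → ℝ := fun x => max (max ‖x‖ (dC x)⁻¹) 1 with hρ
  have hρ1 : ∀ x, 1 ≤ ρ x := fun x => le_max_right _ _
  have hρn : ∀ x, ‖x‖ ≤ ρ x := fun x => (le_max_left _ _).trans (le_max_left _ _)
  have hρi : ∀ x, (dC x)⁻¹ ≤ ρ x := fun x => (le_max_right _ _).trans (le_max_left _ _)
  have hdpos : Cᶜ.Nonempty → ∀ x ∈ C, 0 < dC x := by
    intro hcne x hx
    rw [hdC]
    rw [← hCopen.isClosed_compl.notMem_iff_infDist_pos hcne]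
    simp [hx]
  -- concavity-type inequality for dC
  have hdconc : ∀ x ∈ C, ∀ y ∈ C, ∀ a b : ℝ, 0 ≤ a → 0 ≤ b → a + b = 1 →
      a * dC x + b * dC y ≤ dC (a • x + b • y) := by
    intro x hx y hy a b ha hb hab
    rcases Cᶜ.eq_empty_or_nonempty with hc | hc
    · simp [hdC, hc, infDist_empty]
    · set z := a • x + b • y with hzdef
      set D := a * dC x + b * dC y with hD
      by_contra hlt
      push_neg at hlt
      obtain ⟨p, hpc, hpd⟩ := (infDist_lt_iff hc).1 hlt
      have hDpos : 0 < D := lt_of_le_of_lt dist_nonneg hpd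
      have hdx := hdpos hc x hx
      have hdy := hdpos hc y hy
      set v := p - z with hv
      have hvn : ‖v‖ < D := by
        rw [hv, ← dist_eq_norm, dist_comm]
        exact hpd
      have hmemC : ∀ w : X, w ∈ C → 0 < dC w → ∀ c : ℝ, 0 < c → c ≤ dC w / D →
          w + c • v ∈ C := by
        intro w hw hdw c hc0 hcd
        apply ball_infDist_compl_subset (s := C)
        rw [mem_ball, dist_eq_norm, add_sub_cancel_left, norm_smul, Real.norm_eq_abs,
          abs_of_pos hc0]
        calc c * ‖v‖ ≤ (dC w / D) * ‖v‖ := by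
              apply mul_le_mul_of_nonneg_right hcd (norm_nonneg v)
          _ < (dC w / D) * D := by
              apply mul_lt_mul_of_pos_left hvn (div_pos hdw hDpos)
          _ = dC w := div_mul_cancel₀ _ hDpos.ne'
      have h1 : x + (dC x / D) • v ∈ C :=
        hmemC x hx hdx _ (div_pos hdx hDpos) le_rfl
      have h2 : y + (dC y / D) • v ∈ C :=
        hmemC y hy hdy _ (div_pos hdy hDpos) le_rfl
      have hco : a * (dC x / D) + b * (dC y / D) = 1 := by
        field_simp
        exact hD.symm
      have hsum : a • (x + (dC x / D) • v) + b • (y + (dC y / D) • v) = p := by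
        have e1 : a • (x + (dC x / D) • v) + b • (y + (dC y / D) • v)
            = (a • x + b • y) + (a * (dC x / D) + b * (dC y / D)) • v := by
          module
        rw [e1, hco, one_smul, ← hzdef, hv]
        abel
      have : p ∈ C := by
        rw [← hsum]
        exact hCconv h1 h2 ha hb hab
      exact hpc this
  have hρconv : ConvexOn ℝ C ρ := by
    refine ⟨hCconv, ?_⟩
    intro x hx y hy a b ha hb hab
    have hz : a • x + b • y ∈ C := hCconv hx hy ha hb hab
    simp only [smul_eq_mul]
    have hgoal1 : ‖a • x + b • y‖ ≤ a * ρ x + b * ρ y := by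
      calc ‖a • x + b • y‖ ≤ ‖a • x‖ + ‖b • y‖ := norm_add_le _ _
        _ = a * ‖x‖ + b * ‖y‖ := by
            rw [norm_smul, norm_smul, Real.norm_eq_abs, Real.norm_eq_abs,
              abs_of_nonneg ha, abs_of_nonneg hb]
        _ ≤ a * ρ x + b * ρ y := by
            exact add_le_add (mul_le_mul_of_nonneg_left (hρn x) ha)
              (mul_le_mul_of_nonneg_left (hρn y) hb)
    have hgoal3 : 1 ≤ a * ρ x + b * ρ y := by
      have h1 := mul_le_mul_of_nonneg_left (hρ1 x) ha
      have h2 := mul_le_mul_of_nonneg_left (hρ1 y) hb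
      linarith
    have hgoal2 : (dC (a • x + b • y))⁻¹ ≤ a * ρ x + b * ρ y := by
      rcases Cᶜ.eq_empty_or_nonempty with hc | hc
      · have : dC (a • x + b • y) = 0 := by simp [hdC, hc, infDist_empty]
        rw [this, inv_zero]
        linarith
      · have hdx := hdpos hc x hx
        have hdy := hdpos hc y hy
        have hpos := dc_pos_combo hdx hdy ha hb hab
        have step1 : (dC (a • x + b • y))⁻¹ ≤ (a * dC x + b * dC y)⁻¹ :=
          inv_anti₀ hpos (hdconc x hx y hy a b ha hb hab)
        have step2 : (a * dC x + b * dC y)⁻¹ ≤ a * (dC x)⁻¹ + b * (dC y)⁻¹ :=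
          dc_amhm' hdx hdy ha hb hab
        refine step1.trans (step2.trans ?_)
        exact add_le_add (mul_le_mul_of_nonneg_left (hρi x) ha)
          (mul_le_mul_of_nonneg_left (hρi y) hb)
    exact max_le (max_le hgoal1 hgoal2) hgoal3
  have hinv : ContinuousOn (fun x : X => (dC x)⁻¹) C := by
    rcases Cᶜ.eq_empty_or_nonempty with hc | hc
    · have : (fun x : X => (dC x)⁻¹) = fun _ => (0 : ℝ) := by
        funext x; simp [hdC, hc, infDist_empty]
      rw [this]
      exact continuousOn_const
    · intro x hx
      exact ((continuous_infDist_pt Cᶜ).continuousAt.inv₀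
        (hdpos hc x hx).ne').continuousWithinAt
  have hρcont : ContinuousOn ρ C :=
    dc_contOn_max (dc_contOn_max continuous_norm.continuousOn hinv) continuousOn_const
  refine ⟨ρ, hρcont, hρconv, hρ1, hρn, ?_⟩
  intro r hr
  have hrpos : (0:ℝ) < r := lt_of_lt_of_le one_pos hr
  rcases Cᶜ.eq_empty_or_nonempty with hc | hc
  · have hCuniv : C = univ := compl_empty_iff.mp hc
    have hset : {x ∈ C | ρ x ≤ r} = (fun x : X => max (max ‖x‖ (0:ℝ)⁻¹) 1) ⁻¹' Iic r := by
      ext x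
      simp [hCuniv, hρ, hdC, hc, infDist_empty]
    rw [hset]
    exact isClosed_Iic.preimage ((continuous_norm.max continuous_const).max continuous_const)
  · have hset : {x ∈ C | ρ x ≤ r} =
        (fun x : X => ‖x‖) ⁻¹' Iic r ∩ (fun x : X => dC x) ⁻¹' Ici r⁻¹ := by
      ext x
      constructor
      · rintro ⟨hxC, hxρ⟩
        rw [hρ] at hxρ
        have h1 : ‖x‖ ≤ r := le_trans ((le_max_left _ _).trans (le_max_left _ _)) hxρ
        have h2 : (dC x)⁻¹ ≤ r := le_trans ((le_max_right _ _).trans (le_max_left _ _)) hxρ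
        have hd := hdpos hc x hxC
        have h3 : r⁻¹ ≤ dC x := by
          have := inv_anti₀ (inv_pos.2 hd) h2
          rwa [inv_inv] at this
        exact ⟨h1, h3⟩
      · rintro ⟨h1, h2⟩
        simp only [Set.mem_preimage, Set.mem_Iic, Set.mem_Ici] at h1 h2
        have hd : 0 < dC x := lt_of_lt_of_le (inv_pos.2 hrpos) h2
        have hxC : x ∈ C := by
          by_contra hxc
          have : dC x = 0 := by
            rw [hdC]
            exact infDist_zero_of_mem hxc
          rw [this] at hd
          exact lt_irrefl _ hd
        refine ⟨hxC, ?_⟩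
        rw [hρ]
        refine max_le (max_le h1 ?_) hr
        have := inv_anti₀ (inv_pos.2 hrpos) h2
        rwa [inv_inv] at this
    rw [hset]
    exact (isClosed_Iic.preimage continuous_norm).inter
      (isClosed_Ici.preimage (continuous_infDist_pt _))

private lemma dc_exists_slope_bound {Z : Type*} [NormedAddCommGroup Z] [NormedSpace ℝ Z]
    {I : Set ℝ} (hIopen : IsOpen I) (G : ℝ → Z) (g : ℝ → ℝ)
    (hctrl : ∀ φ : Z →L[ℝ] ℝ, ‖φ‖ ≤ 1 → ConvexOn ℝ I (fun t => φ (G t) + g t)) :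
    ∃ u : ℝ → ℝ, (∀ t ∈ I, 0 ≤ u t) ∧
      (∀ t₁ ∈ I, ∀ t₂ ∈ I, t₁ ≤ t₂ → u t₂ ≤ u t₁) ∧
      (∀ φ : Z →L[ℝ] ℝ, ‖φ‖ ≤ 1 → ∀ t ∈ I, ∀ s ∈ I, t ≤ s →
        φ (G t) + g t - (φ (G s) + g s) ≤ u t * (s - t)) := by
  classical
  set SS : ℝ → Set ℝ := fun t => insert 0
    {r | ∃ φ : Z →L[ℝ] ℝ, ‖φ‖ ≤ 1 ∧ ∃ s ∈ I, t < s ∧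
      r = (φ (G t) + g t - (φ (G s) + g s)) / (s - t)} with hSS
  have hmem0 : ∀ t, (0:ℝ) ∈ SS t := fun t => Set.mem_insert _ _
  have hBdd : ∀ t ∈ I, BddAbove (SS t) := by
    intro t ht
    obtain ⟨ε, hε, hball⟩ := Metric.isOpen_iff.1 hIopen t ht
    set t' := t - ε / 2 with ht'def
    have ht' : t' ∈ I := by
      apply hball
      rw [mem_ball, ht'def, dist_eq_norm]
      simp only [sub_sub_cancel_left, norm_neg, Real.norm_eq_abs]
      rw [abs_of_pos (by linarith)]
      linarith
    have htt' : t' < t := by rw [ht'def]; linarith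
    refine ⟨max 0 ((‖G t' - G t‖ + (g t' - g t)) / (t - t')), ?_⟩
    rintro r (rfl | ⟨φ, hφ, s, hs, hts, rfl⟩)
    · exact le_max_left _ _
    · refine le_max_of_le_right ?_
      have hsl := (hctrl φ hφ).slope_mono_adjacent ht' hs htt' hts
      have h1 : (φ (G t) + g t - (φ (G s) + g s)) / (s - t)
          ≤ (φ (G t') + g t' - (φ (G t) + g t)) / (t - t') := by
        have h2 := neg_le_neg hsl
        rw [← neg_div, ← neg_div] at h2
        simpa [neg_sub] using h2
      refine h1.trans ?_
      have hnum : φ (G t') + g t' - (φ (G t) + g t) ≤ ‖G t' - G t‖ + (g t' - g t) := by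
        have h3 : φ (G t') - φ (G t) ≤ ‖G t' - G t‖ := by
          rw [← map_sub]
          calc φ (G t' - G t) ≤ |φ (G t' - G t)| := le_abs_self _
            _ = ‖φ (G t' - G t)‖ := (Real.norm_eq_abs _).symm
            _ ≤ ‖φ‖ * ‖G t' - G t‖ := φ.le_opNorm _
            _ ≤ 1 * ‖G t' - G t‖ := mul_le_mul_of_nonneg_right hφ (norm_nonneg _)
            _ = ‖G t' - G t‖ := one_mul _
        linarith
      gcongr
  set u : ℝ → ℝ := fun t => sSup (SS t) with hu
  have hu_nn : ∀ t ∈ I, 0 ≤ u t := fun t ht => le_csSup (hBdd t ht) (hmem0 t)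
  refine ⟨u, hu_nn, ?_, ?_⟩
  · intro t₁ h1 t₂ h2 h12
    rcases eq_or_lt_of_le h12 with rfl | hlt
    · exact le_rfl
    apply csSup_le ⟨0, hmem0 t₂⟩
    rintro r (rfl | ⟨φ, hφ, s, hs, hts, rfl⟩)
    · exact hu_nn t₁ h1
    · have hsl := (hctrl φ hφ).slope_mono_adjacent h1 hs hlt hts
      have h3 : (φ (G t₂) + g t₂ - (φ (G s) + g s)) / (s - t₂)
          ≤ (φ (G t₁) + g t₁ - (φ (G t₂) + g t₂)) / (t₂ - t₁) := by
        have h2 := neg_le_neg hsl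
        rw [← neg_div, ← neg_div] at h2
        simpa [neg_sub] using h2
      refine h3.trans (le_csSup (hBdd t₁ h1) ?_)
      exact Set.mem_insert_iff.2 (Or.inr ⟨φ, hφ, t₂, h2, hlt, rfl⟩)
  · intro φ hφ t ht s hs hts
    rcases eq_or_lt_of_le hts with rfl | hlt
    · simp
    · have hmem : (φ (G t) + g t - (φ (G s) + g s)) / (s - t) ∈ SS t :=
        Set.mem_insert_iff.2 (Or.inr ⟨φ, hφ, s, hs, hlt, rfl⟩)
      have hle := le_csSup (hBdd t ht) hmem
      have hst : 0 < s - t := by linarith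
      calc φ (G t) + g t - (φ (G s) + g s)
          = ((φ (G t) + g t - (φ (G s) + g s)) / (s - t)) * (s - t) := by
            field_simp
        _ ≤ u t * (s - t) := mul_le_mul_of_nonneg_right hle hst.le

/-- In a reflexive Banach space, the composition of a d.c. mapping on an
open interval `I` with a continuous convex function whose range lies in `I` is d.c. -/
theorem dc_comp_convex_reflexive {X Z : Type*}
    [NormedAddCommGroup X] [NormedSpace ℝ X] [CompleteSpace X]
    [NormedAddCommGroup Z] [NormedSpace ℝ Z]
    (hrefl : Function.Surjective (NormedSpace.inclusionInDoubleDual ℝ X))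
    (C : Set X) (hCopen : IsOpen C) (hCconv : Convex ℝ C)
    (f : X → ℝ) (hfcont : ContinuousOn f C) (hfconv : ConvexOn ℝ C f)
    (I : Set ℝ) (hIopen : IsOpen I) (hIconv : Convex ℝ I) (hfI : f '' C ⊆ I)
    (G : ℝ → Z) (hG : IsDCOn I G) :
    IsDCOn C (G ∘ f) := by
  classical
  obtain ⟨hGcont, g, hgcont, hgctrl⟩ := hG
  have hfI' : ∀ x ∈ C, f x ∈ I := fun x hx => hfI ⟨x, hx, rfl⟩
  have hGf_cont : ContinuousOn (G ∘ f) C := hGcont.comp hfcont hfI'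
  rcases C.eq_empty_or_nonempty with rfl | hCne
  · exact ⟨continuousOn_empty _, 0, continuousOn_empty _,
      fun φ hφ => ⟨convex_empty, fun x hx => absurd hx (Set.notMem_empty x)⟩⟩
  obtain ⟨u, hu_nn, hu_anti, hu_key⟩ := dc_exists_slope_bound hIopen G g hgctrl
  obtain ⟨ρ, hρcont, hρconv, hρ1, hρn, hKcl⟩ := dc_exists_gauge hCopen hCconv
  set K : ℝ → Set X := fun r => {x ∈ C | ρ x ≤ r} with hK
  have hKsub : ∀ r, K r ⊆ C := fun r x hx => hx.1
  have hKconv : ∀ r : ℝ, Convex ℝ (K r) := fun r => hρconv.convex_le r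
  have hKbdd : ∀ r : ℝ, IsBounded (K r) := by
    intro r
    apply (isBounded_closedBall (x := (0:X)) (r := r)).subset
    intro x hx
    rw [mem_closedBall_zero_iff]
    exact (hρn x).trans hx.2
  have hKmono : ∀ r r' : ℝ, r ≤ r' → K r ⊆ K r' := fun r r' h x hx => ⟨hx.1, hx.2.trans h⟩
  have hxK : ∀ x ∈ C, x ∈ K (ρ x) := fun x hx => ⟨hx, le_rfl⟩
  set m : ℝ → ℝ := fun r => sInf (f '' K r) with hm
  have hLeast : ∀ r : ℝ, 1 ≤ r → (K r).Nonempty → IsLeast (f '' K r) (m r) := by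
    intro r hr hne
    obtain ⟨x₀, hx₀K, hx₀min⟩ := dc_reflexive_exists_min hrefl hne (hKcl r hr) (hKbdd r)
      (hfcont.mono (hKsub r)) (hfconv.subset (hKsub r) (hKconv r))
    have hL : IsLeast (f '' K r) (f x₀) :=
      ⟨⟨x₀, hx₀K, rfl⟩, by rintro _ ⟨y, hy, rfl⟩; exact hx₀min y hy⟩
    have hmr : m r = f x₀ := hL.csInf_eq
    rw [hmr]
    exact hL
  have hmI : ∀ r : ℝ, 1 ≤ r → (K r).Nonempty → m r ∈ I := by
    intro r hr hne
    obtain ⟨y, hyK, hyeq⟩ := (hLeast r hr hne).1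
    exact hyeq ▸ hfI' y (hKsub r hyK)
  have hmle : ∀ r : ℝ, 1 ≤ r → (K r).Nonempty → ∀ x ∈ K r, m r ≤ f x :=
    fun r hr hne x hx => (hLeast r hr hne).2 ⟨x, hx, rfl⟩
  have hmanti : ∀ r r' : ℝ, 1 ≤ r → (K r).Nonempty → r ≤ r' → m r' ≤ m r := by
    intro r r' hr hne h
    obtain ⟨y, hyK, hyeq⟩ := (hLeast r hr hne).1
    rw [← hyeq]
    exact hmle r' (hr.trans h) (hne.mono (hKmono r r' h)) y (hKmono r r' h hyK)
  set A₀ : ℝ → ℝ := fun r => Real.log (max (u (m r)) 1) - m r with hA₀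
  have hA₀mono : ∀ r r' : ℝ, 1 ≤ r → (K r).Nonempty → r ≤ r' → A₀ r ≤ A₀ r' := by
    intro r r' hr hne h
    have hne' : (K r').Nonempty := hne.mono (hKmono r r' h)
    have h1 : m r' ≤ m r := hmanti r r' hr hne h
    have h2 : u (m r) ≤ u (m r') :=
      hu_anti (m r') (hmI r' (hr.trans h) hne') (m r) (hmI r hr hne) h1
    have h3 : Real.log (max (u (m r)) 1) ≤ Real.log (max (u (m r')) 1) :=
      Real.log_le_log (lt_of_lt_of_le one_pos (le_max_right _ _)) (max_le_max h2 le_rfl)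
    simp only [hA₀]
    linarith
  obtain ⟨A, hAconv, hAmono, hAcont, hAgrid⟩ := dc_exists_convex_majorant (fun n => A₀ (1 + n))
  have hAmaj : ∀ x ∈ C, A₀ (ρ x) ≤ A (ρ x) := by
    intro x hx
    have h1r := hρ1 x
    set n : ℕ := ⌊ρ x - 1⌋₊ with hn
    have h2 : (n:ℝ) ≤ ρ x - 1 := Nat.floor_le (by linarith)
    have h3 : ρ x - 1 < n + 1 := Nat.lt_floor_add_one _
    have step1 : A₀ (ρ x) ≤ A₀ (1 + ((n:ℝ) + 1)) :=
      hA₀mono (ρ x) _ h1r ⟨x, hxK x hx⟩ (by linarith)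
    have step3 : A₀ (1 + ((n + 1 : ℕ) : ℝ)) ≤ A (ρ x) := hAgrid n (ρ x) (by linarith)
    refine step1.trans (le_trans (le_of_eq ?_) step3)
    push_cast
    ring_nf
  set T : X → ℝ := fun x => f x + A (ρ x) with hT
  set η : X → ℝ := fun x => Real.exp (T x) with hη
  set F : X → ℝ := fun x => g (f x) + η x with hF
  refine ⟨hGf_cont, F, ?_, ?_⟩
  · have h1 : ContinuousOn (fun x => g (f x)) C := hgcont.comp hfcont hfI'
    have h2 : ContinuousOn T C := hfcont.add (hAcont.comp_continuousOn hρcont)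
    have h3 : ContinuousOn η C := Real.continuous_exp.comp_continuousOn h2
    exact h1.add h3
  · intro φ hφ
    refine ⟨hCconv, ?_⟩
    intro x hx y hy a b ha hb hab
    simp only [Function.comp_apply, smul_eq_mul]
    set z := a • x + b • y with hz
    have hzC : z ∈ C := hCconv hx hy ha hb hab
    have hfz := hfI' z hzC
    have hfx := hfI' x hx
    have hfy := hfI' y hy
    have hsI : a * f x + b * f y ∈ I := by
      have := hIconv hfx hfy ha hb hab
      simpa [smul_eq_mul] using this
    have hfzs : f z ≤ a * f x + b * f y := by
      have := hfconv.2 hx hy ha hb hab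
      simpa [smul_eq_mul, ← hz] using this
    have h1 : φ (G (f z)) + g (f z) - (φ (G (a * f x + b * f y)) + g (a * f x + b * f y))
        ≤ u (f z) * ((a * f x + b * f y) - f z) := hu_key φ hφ (f z) hfz _ hsI hfzs
    have h2 : φ (G (a * f x + b * f y)) + g (a * f x + b * f y)
        ≤ a * (φ (G (f x)) + g (f x)) + b * (φ (G (f y)) + g (f y)) := by
      have := (hgctrl φ hφ).2 hfx hfy ha hb hab
      simpa [smul_eq_mul] using this
    have hρz : ρ z ≤ a * ρ x + b * ρ y := by
      have := hρconv.2 hx hy ha hb hab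
      simpa [smul_eq_mul, ← hz] using this
    have hAz : A (ρ z) ≤ a * A (ρ x) + b * A (ρ y) := by
      have hstep := hAconv.2 (Set.mem_univ (ρ x)) (Set.mem_univ (ρ y)) ha hb hab
      calc A (ρ z) ≤ A (a * ρ x + b * ρ y) := hAmono hρz
        _ ≤ a * A (ρ x) + b * A (ρ y) := by simpa [smul_eq_mul] using hstep
    have hKzne : (K (ρ z)).Nonempty := ⟨z, hxK z hzC⟩
    have h1rz := hρ1 z
    have hmz : m (ρ z) ≤ f z := hmle (ρ z) h1rz hKzne z (hxK z hzC)
    have hmzI : m (ρ z) ∈ I := hmI (ρ z) h1rz hKzne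
    have huz : u (f z) ≤ u (m (ρ z)) := hu_anti (m (ρ z)) hmzI (f z) hfz hmz
    have hTz_lb : Real.log (max (u (f z)) 1) ≤ T z := by
      have hl : Real.log (max (u (f z)) 1) ≤ Real.log (max (u (m (ρ z))) 1) :=
        Real.log_le_log (lt_of_lt_of_le one_pos (le_max_right _ _)) (max_le_max huz le_rfl)
      have h4 := hAmaj z hzC
      simp only [hA₀] at h4
      simp only [hT]
      linarith
    have hexp_ge : u (f z) ≤ Real.exp (T z) := by
      have h5 : max (u (f z)) 1 ≤ Real.exp (T z) := by
        rw [← Real.exp_log (lt_of_lt_of_le one_pos (le_max_right (u (f z)) 1))]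
        exact Real.exp_le_exp.2 hTz_lb
      exact (le_max_left _ _).trans h5
    have hconvexp' : Real.exp (a * T x + b * T y)
        ≤ a * Real.exp (T x) + b * Real.exp (T y) := by
      have := convexOn_exp.2 (Set.mem_univ (T x)) (Set.mem_univ (T y)) ha hb hab
      simpa [smul_eq_mul] using this
    have hslope : Real.exp (T z) + Real.exp (T z) * ((a * T x + b * T y) - T z)
        ≤ Real.exp (a * T x + b * T y) := by
      have h6 := Real.add_one_le_exp ((a * T x + b * T y) - T z)
      have h7 : Real.exp (T z) * (1 + ((a * T x + b * T y) - T z))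
          ≤ Real.exp (T z) * Real.exp ((a * T x + b * T y) - T z) :=
        mul_le_mul_of_nonneg_left (by linarith) (Real.exp_pos _).le
      rw [← Real.exp_add] at h7
      have h8 : T z + ((a * T x + b * T y) - T z) = a * T x + b * T y := by ring
      rw [h8] at h7
      nlinarith [h7]
    have hηz : η z + u (f z) * ((a * f x + b * f y) - f z) ≤ a * η x + b * η y := by
      have hΔT : (a * f x + b * f y) - f z ≤ (a * T x + b * T y) - T z := by
        simp only [hT]
        nlinarith [hAz]
      have hΔf_nn : 0 ≤ (a * f x + b * f y) - f z := by linarith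
      have h8 : u (f z) * ((a * f x + b * f y) - f z)
          ≤ Real.exp (T z) * ((a * T x + b * T y) - T z) := by
        calc u (f z) * ((a * f x + b * f y) - f z)
            ≤ Real.exp (T z) * ((a * f x + b * f y) - f z) :=
              mul_le_mul_of_nonneg_right hexp_ge hΔf_nn
          _ ≤ Real.exp (T z) * ((a * T x + b * T y) - T z) :=
              mul_le_mul_of_nonneg_left hΔT (Real.exp_pos _).le
      simp only [hη]
      linarith [hslope, hconvexp']
    simp only [hF]
    nlinarith [h1, h2, hηz]
end

section
/- Let X be a reflexive real Banach space, C ⊆ X an open convex set, and f : C → ℝ a continuous convex function with f(x) > 0 for all x ∈ C. Then the function 1/f is d.c. on C, i.e., 1/f is representable as a difference of two continuous convex functions on C. -/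
open Set Metric Bornology Filter NNReal

section Aux

lemma aux_inv_combo {a b la lb : ℝ} (ha : 0 < a) (hb : 0 < b) (hla : 0 ≤ la) (hlb : 0 ≤ lb)
    (hl : la + lb = 1) : (la*a + lb*b)⁻¹ ≤ la * a⁻¹ + lb * b⁻¹ := by
  have hm : 0 < la*a + lb*b := by
    nlinarith [mul_nonneg hla (sub_nonneg.2 (min_le_left a b)), mul_nonneg hlb (sub_nonneg.2 (min_le_right a b)), lt_min ha hb]
  rw [inv_eq_one_div, div_le_iff₀ hm]
  have h1 : a * a⁻¹ = 1 := mul_inv_cancel₀ ha.ne'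
  have h2 : b * b⁻¹ = 1 := mul_inv_cancel₀ hb.ne'
  have key : 2 ≤ b*a⁻¹ + a*b⁻¹ := by
    rw [← sub_nonneg]
    have h3 : b*a⁻¹ + a*b⁻¹ - 2 = (a-b)^2 * (a⁻¹*b⁻¹) := by field_simp; ring
    rw [h3]; positivity
  have key2 : (la*lb)*2 ≤ (la*lb)*(b*a⁻¹ + a*b⁻¹) :=
    mul_le_mul_of_nonneg_left key (mul_nonneg hla hlb)
  have expand : (la * a⁻¹ + lb * b⁻¹)*(la*a+lb*b)
      = la^2*(a*a⁻¹) + lb^2*(b*b⁻¹) + (la*lb)*(b*a⁻¹ + a*b⁻¹) := by ring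
  rw [expand, h1, h2]
  nlinarith [sq_nonneg (la + lb)]


lemma aux_combo_pos {A B a b : ℝ} (hA : 0 < A) (hB : 0 < B) (ha : 0 ≤ a) (hb : 0 ≤ b)
    (hab : a + b = 1) : 0 < a*A + b*B := by
  nlinarith [mul_nonneg ha (sub_nonneg.2 (min_le_left A B)),
    mul_nonneg hb (sub_nonneg.2 (min_le_right A B)), lt_min hA hB]

variable {X : Type*} [NormedAddCommGroup X] [NormedSpace ℝ X]

lemma infDist_compl_combo {C : Set X} (hCconv : Convex ℝ C) {x y : X}
    (hx : x ∈ C) (hy : y ∈ C) {a b : ℝ} (ha : 0 ≤ a) (hb : 0 ≤ b) (hab : a + b = 1) :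
    a * infDist x Cᶜ + b * infDist y Cᶜ ≤ infDist (a•x + b•y) Cᶜ := by
  rcases Cᶜ.eq_empty_or_nonempty with h | hne
  · simp [h, infDist_empty]
  by_contra hcon
  push_neg at hcon
  set dx := infDist x Cᶜ with hdx
  set dy := infDist y Cᶜ with hdy
  set z := a•x + b•y with hz
  set R := a*dx + b*dy with hR
  obtain ⟨w, hwmem, hwdist⟩ := (infDist_lt_iff hne).1 hcon
  have hRpos : 0 < R := lt_of_le_of_lt dist_nonneg hwdist
  have hvnorm : ‖w - z‖ < R := by rwa [dist_eq_norm'] at hwdist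
  have hmem_of_small : ∀ (u : X), u ∈ C → ∀ (t : X), ‖t‖ < infDist u Cᶜ → u + t ∈ C := by
    intro u hu t ht
    by_contra hnot
    have h2 : infDist u Cᶜ ≤ dist u (u + t) :=
      infDist_le_dist_of_mem (show u + t ∈ Cᶜ from hnot)
    rw [dist_eq_norm'] at h2
    simp only [add_sub_cancel_left] at h2
    exact absurd (lt_of_le_of_lt h2 ht) (lt_irrefl _)
  have hsplit : ∀ (u : X) (du : ℝ), u ∈ C → du = infDist u Cᶜ →
      u + (du/R) • (w - z) ∈ C := by
    intro u du hu hdu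
    rcases eq_or_lt_of_le (hdu ▸ infDist_nonneg : (0:ℝ) ≤ du) with h0 | hpos
    · simp [← h0, hu]
    · apply hmem_of_small u hu
      rw [norm_smul, Real.norm_eq_abs, abs_of_nonneg (by positivity : (0:ℝ) ≤ du/R)]
      calc du/R * ‖w - z‖ < du/R * R := by
            apply mul_lt_mul_of_pos_left hvnorm (by positivity)
        _ = du := by field_simp
        _ = infDist u Cᶜ := hdu
  have hx' := hsplit x dx hx rfl
  have hy' := hsplit y dy hy rfl
  have hscal : a*(dx/R) + b*(dy/R) = 1 := by
    field_simp
    exact hR.symm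
  have hw2 : a•(x + (dx/R)•(w-z)) + b•(y + (dy/R)•(w-z)) = w := by
    rw [smul_add, smul_add, smul_smul, smul_smul]
    have h3 : a • x + (a * (dx / R)) • (w - z) + (b • y + (b * (dy / R)) • (w - z))
        = (a•x + b•y) + ((a*(dx/R)) + (b*(dy/R))) • (w-z) := by
      rw [add_smul]; abel
    rw [h3, hscal, one_smul, ← hz]
    abel
  have hwC : w ∈ C := hw2 ▸ hCconv hx' hy' ha hb hab
  exact hwmem hwC


/-- In a reflexive space, a positive continuous convex function is bounded away from zero
on every closed bounded convex subset of its (open) domain. -/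
lemma reflexive_pos_lower_bound
    (hrefl : Function.Surjective (NormedSpace.inclusionInDoubleDual ℝ X))
    {C D : Set X} (hCopen : IsOpen C) (hsub : D ⊆ C)
    (hDconv : Convex ℝ D) (hDclosed : IsClosed D) (hDbdd : Bornology.IsBounded D)
    {f : X → ℝ} (hfcont : ContinuousOn f C) (hfconv : ConvexOn ℝ C f)
    (hfpos : ∀ x ∈ C, 0 < f x) :
    ∃ μ > 0, ∀ z ∈ D, μ ≤ f z := by
  rcases D.eq_empty_or_nonempty with rfl | hne
  · exact ⟨1, one_pos, by simp⟩
  have hbdd : BddBelow (f '' D) := ⟨0, by rintro _ ⟨x, hx, rfl⟩; exact (hfpos x (hsub hx)).le⟩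
  set ι := sInf (f '' D) with hι
  set S : ℕ → Set X := fun k => {x ∈ D | f x ≤ ι + 1/(k+1)} with hS
  have hSsubD : ∀ k, S k ⊆ D := fun k x hx => hx.1
  have hSne : ∀ k, (S k).Nonempty := by
    intro k
    have hpos : (0:ℝ) < 1/(k+1) := by positivity
    obtain ⟨v, ⟨x, hxD, rfl⟩, hv⟩ :=
      exists_lt_of_csInf_lt (hne.image f) (lt_add_of_pos_right ι hpos)
    exact ⟨x, hxD, hv.le⟩
  have hSconv : ∀ k, Convex ℝ (S k) := by
    intro k
    have h1 : S k = D ∩ {x ∈ C | f x ≤ ι + 1/(k+1)} := by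
      ext x; constructor
      · rintro ⟨h1, h2⟩; exact ⟨h1, hsub h1, h2⟩
      · rintro ⟨h1, _, h3⟩; exact ⟨h1, h3⟩
    rw [h1]
    exact hDconv.inter (hfconv.convex_le _)
  have hSclosed : ∀ k, IsClosed (S k) := by
    intro k
    apply isClosed_of_closure_subset
    intro x hx
    have hxD : x ∈ D := hDclosed.closure_subset ((closure_mono (hSsubD k)) hx)
    have hxC : x ∈ C := hsub hxD
    have hcont : ContinuousWithinAt f (S k) x :=
      ((hfcont.continuousAt (hCopen.mem_nhds hxC)).continuousWithinAt)
    have hneBot : (nhdsWithin x (S k)).NeBot := mem_closure_iff_nhdsWithin_neBot.1 hx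
    have hle : f x ≤ ι + 1/(k+1) :=
      le_of_tendsto hcont (eventually_nhdsWithin_of_forall (fun y hy => hy.2))
    exact ⟨hxD, hle⟩
  have hSanti : ∀ k, S (k+1) ⊆ S k := by
    intro k x hx
    refine ⟨hx.1, hx.2.trans (by gcongr <;> norm_num)⟩
  -- move to the bidual with the weak-star topology
  obtain ⟨R, hR⟩ := hDbdd.subset_closedBall 0
  set J := NormedSpace.inclusionInDoubleDual ℝ X with hJ
  set T : ℕ → Set (WeakDual ℝ (StrongDual ℝ X)) :=
    fun k => closure ((fun x => StrongDual.toWeakDual (J x)) '' S k) with hT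
  have hball : IsCompact (WeakDual.toStrongDual ⁻¹'
      closedBall (0 : StrongDual ℝ (StrongDual ℝ X)) R) :=
    WeakDual.isCompact_closedBall 0 R
  have hTsub : ∀ k, T k ⊆ WeakDual.toStrongDual ⁻¹'
      closedBall (0 : StrongDual ℝ (StrongDual ℝ X)) R := by
    intro k
    apply closure_minimal _ (hball.isClosed)
    rintro _ ⟨x, hxS, rfl⟩
    simp only [mem_preimage, mem_closedBall, dist_zero_right]
    have h1 : ‖J x‖ ≤ ‖x‖ := NormedSpace.double_dual_bound ℝ X x
    have h2 : ‖x‖ ≤ R := by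
      have := hR (hSsubD k hxS)
      simpa [mem_closedBall, dist_zero_right] using this
    calc dist (WeakDual.toStrongDual (StrongDual.toWeakDual (J x))) 0 = ‖J x‖ := by exact dist_zero_right (J x)
      _ ≤ R := h1.trans h2
  have hTcomp : ∀ k, IsCompact (T k) := fun k =>
    IsCompact.of_isClosed_subset hball isClosed_closure (hTsub k)
  have hTne : ∀ k, (T k).Nonempty := fun k => ((hSne k).image _).closure
  have hTanti : ∀ k, T (k+1) ⊆ T k := fun k =>
    closure_mono (image_mono (hSanti k))
  obtain ⟨F, hF⟩ := IsCompact.nonempty_iInter_of_sequence_nonempty_isCompact_isClosed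
    T hTanti hTne (hTcomp 0) (fun k => isClosed_closure)
  obtain ⟨x, hxJ⟩ := hrefl (WeakDual.toStrongDual F)
  have hxS : ∀ k, x ∈ S k := by
    intro k
    by_contra hxnot
    obtain ⟨φ, u, hu1, hu2⟩ :=
      geometric_hahn_banach_closed_point (hSconv k) (hSclosed k) hxnot
    have hclosed : IsClosed {G : WeakDual ℝ (StrongDual ℝ X) | G φ ≤ u} :=
      isClosed_le (WeakDual.eval_continuous φ) continuous_const
    have hTk : T k ⊆ {G : WeakDual ℝ (StrongDual ℝ X) | G φ ≤ u} := by
      apply closure_minimal _ hclosed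
      rintro _ ⟨y, hyS, rfl⟩
      have : J y φ = φ y := NormedSpace.dual_def ℝ X y φ
      simp only [mem_setOf_eq]
      calc StrongDual.toWeakDual (J y) φ = J y φ := rfl
        _ = φ y := this
        _ ≤ u := (hu1 y hyS).le
    have hFk : F φ ≤ u := hTk (mem_iInter.1 hF k)
    have hFx : F φ = φ x := by
      have h1 : (WeakDual.toStrongDual F) φ = F φ := rfl
      rw [← h1, ← hxJ]
      exact NormedSpace.dual_def ℝ X x φ
    rw [hFx] at hFk
    exact absurd hu2 (not_lt.2 hFk)
  have hxD : x ∈ D := (hxS 0).1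
  have hfxι : f x ≤ ι := by
    apply le_of_forall_pos_le_add
    intro ε hε
    obtain ⟨k, hk⟩ := exists_nat_one_div_lt hε
    exact ((hxS k).2).trans (by linarith)
  refine ⟨f x, hfpos x (hsub hxD), fun z hz => hfxι.trans (csInf_le hbdd ⟨z, hz, rfl⟩)⟩


/-- convexity of the reciprocal of `infDist · Cᶜ` on an open convex set. -/
lemma convexOn_inv_infDist {C : Set X} (hCopen : IsOpen C) (hCconv : Convex ℝ C) :
    ConvexOn ℝ C (fun x => (infDist x Cᶜ)⁻¹) := by
  refine ⟨hCconv, fun x hx y hy a b ha hb hab => ?_⟩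
  rcases Cᶜ.eq_empty_or_nonempty with h | hne
  · simp [h, infDist_empty]
  have hdx : 0 < infDist x Cᶜ :=
    ((hCopen.isClosed_compl).notMem_iff_infDist_pos hne).1 (by simpa using hx)
  have hdy : 0 < infDist y Cᶜ :=
    ((hCopen.isClosed_compl).notMem_iff_infDist_pos hne).1 (by simpa using hy)
  have hcombo := infDist_compl_combo hCconv hx hy ha hb hab
  have hpos : 0 < a * infDist x Cᶜ + b * infDist y Cᶜ := aux_combo_pos hdx hdy ha hb hab
  have h1 : (infDist (a•x + b•y) Cᶜ)⁻¹ ≤ (a * infDist x Cᶜ + b * infDist y Cᶜ)⁻¹ :=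
    inv_anti₀ hpos hcombo
  have h2 := aux_inv_combo hdx hdy ha hb hab
  simp only [smul_eq_mul]
  exact h1.trans h2

lemma continuousOn_inv_infDist {C : Set X} (hCopen : IsOpen C) :
    ContinuousOn (fun x => (infDist x Cᶜ)⁻¹) C := by
  rcases Cᶜ.eq_empty_or_nonempty with h | hne
  · rw [h]
    simp only [infDist_empty]
    exact continuousOn_const
  intro x hx
  have hdx : 0 < infDist x Cᶜ :=
    ((hCopen.isClosed_compl).notMem_iff_infDist_pos hne).1 (by simpa using hx)
  exact (((continuous_infDist_pt Cᶜ).continuousAt).inv₀ hdx.ne').continuousWithinAt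

end Aux

set_option maxHeartbeats 2000000 in
/-- In a reflexive Banach space, the reciprocal of a positive continuous
convex function on an open convex set is d.c. -/
theorem dc_reciprocal_of_convex_reflexive {X : Type*}
    [NormedAddCommGroup X] [NormedSpace ℝ X] [CompleteSpace X]
    (hrefl : Function.Surjective (NormedSpace.inclusionInDoubleDual ℝ X))
    (C : Set X) (hCopen : IsOpen C) (hCconv : Convex ℝ C)
    (f : X → ℝ) (hfcont : ContinuousOn f C) (hfconv : ConvexOn ℝ C f)
    (hfpos : ∀ x ∈ C, 0 < f x) :
    IsDCFnOn C (fun x => 1 / f x) := by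
  classical
  -- the auxiliary convex exhaustion function G
  set G : X → ℝ := fun x => max (max ‖x‖ (f x)) ((infDist x Cᶜ)⁻¹) with hGdef
  have hGconv : ConvexOn ℝ C G :=
    ((convexOn_norm hCconv).sup hfconv).sup (convexOn_inv_infDist hCopen hCconv)
  have hGcont : ContinuousOn G C :=
    ((continuous_norm.continuousOn.sup hfcont).sup (continuousOn_inv_infDist hCopen))
  have hfG : ∀ x, f x ≤ G x := fun x => le_trans (le_max_right _ _) (le_max_left _ _)
  have hnormG : ∀ x, ‖x‖ ≤ G x := fun x => le_trans (le_max_left _ _) (le_max_left _ _)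
  have hrG : ∀ x, (infDist x Cᶜ)⁻¹ ≤ G x := fun x => le_max_right _ _
  -- the exhaustion sets
  set D : ℕ → Set X := fun n => {x ∈ C | G x ≤ (n:ℝ)} with hDdef
  have hDsub : ∀ n, D n ⊆ C := fun n x hx => hx.1
  have hDconv : ∀ n, Convex ℝ (D n) := fun n => hGconv.convex_le _
  have hDnorm : ∀ n, ∀ y ∈ D n, ‖y‖ ≤ (n:ℝ) := fun n y hy => (hnormG y).trans hy.2
  have hDbdd : ∀ n, IsBounded (D n) := by
    intro n
    apply (isBounded_closedBall (x := (0:X)) (r := (n:ℝ))).subset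
    intro y hy
    simpa [mem_closedBall, dist_zero_right] using hDnorm n y hy
  have hDclosed : ∀ n, IsClosed (D n) := by
    intro n
    by_cases hD0 : D n = ∅
    · rw [hD0]; exact isClosed_empty
    apply isClosed_of_closure_subset
    intro x hx
    have hxC : x ∈ C := by
      rcases Cᶜ.eq_empty_or_nonempty with hc | hc
      · have hCu : C = univ := by rwa [compl_empty_iff] at hc
        rw [hCu]; trivial
      · obtain ⟨y₀, hy₀⟩ := Set.nonempty_iff_ne_empty.2 hD0
        have hdy₀ : 0 < infDist y₀ Cᶜ :=
          ((hCopen.isClosed_compl).notMem_iff_infDist_pos hc).1 (by simpa using hy₀.1)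
        have hnpos : (0:ℝ) < n :=
          lt_of_lt_of_le (inv_pos.2 hdy₀) ((hrG y₀).trans hy₀.2)
        have hkey : ∀ y ∈ D n, (n:ℝ)⁻¹ ≤ infDist y Cᶜ := by
          intro y hy
          have hdy : 0 < infDist y Cᶜ :=
            ((hCopen.isClosed_compl).notMem_iff_infDist_pos hc).1 (by simpa using hy.1)
          have h1 : (infDist y Cᶜ)⁻¹ ≤ (n:ℝ) := (hrG y).trans hy.2
          calc (n:ℝ)⁻¹ ≤ ((infDist y Cᶜ)⁻¹)⁻¹ := inv_anti₀ (inv_pos.2 hdy) h1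
            _ = infDist y Cᶜ := inv_inv _
        have hclosedset : IsClosed {y : X | (n:ℝ)⁻¹ ≤ infDist y Cᶜ} :=
          isClosed_le continuous_const (continuous_infDist_pt _)
        have hxd : (n:ℝ)⁻¹ ≤ infDist x Cᶜ :=
          hclosedset.closure_subset_iff.2 hkey hx
        by_contra hxe
        have h0 : infDist x Cᶜ = 0 := infDist_zero_of_mem (by simpa using hxe)
        rw [h0] at hxd
        exact absurd hxd (not_le.2 (inv_pos.2 hnpos))
    have hcont : ContinuousWithinAt G (D n) x :=
      (hGcont.continuousAt (hCopen.mem_nhds hxC)).continuousWithinAt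
    have hneBot : (nhdsWithin x (D n)).NeBot := mem_closure_iff_nhdsWithin_neBot.1 hx
    exact ⟨hxC, le_of_tendsto hcont (eventually_nhdsWithin_of_forall fun y hy => hy.2)⟩
  -- positive lower bounds for f on the exhaustion sets (uses reflexivity)
  have hA : ∀ n, ∃ μ > 0, ∀ z ∈ D n, μ ≤ f z := fun n =>
    reflexive_pos_lower_bound hrefl hCopen (hDsub n) (hDconv n) (hDclosed n) (hDbdd n)
      hfcont hfconv hfpos
  choose μ hμpos hμ using hA
  -- the control constants
  set K : ℕ → ℝ := fun n => (Finset.range (n+1)).sup'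
    (Finset.nonempty_range_iff.2 (Nat.succ_ne_zero n)) (fun j => ((μ j)⁻¹)^2) with hKdef
  have hKmono : Monotone K := by
    apply monotone_nat_of_le_succ
    intro n
    simp only [hKdef]
    exact Finset.sup'_mono (fun j => ((μ j)⁻¹)^2) (Finset.range_subset_range.2 (Nat.le_succ _))
      (Finset.nonempty_range_iff.2 (Nat.succ_ne_zero n))
  have hKnn : ∀ n, 0 ≤ K n := by
    intro n
    simp only [hKdef]
    exact le_trans (sq_nonneg ((μ n)⁻¹))
      (Finset.le_sup' (fun j => ((μ j)⁻¹)^2) (Finset.self_mem_range_succ n))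
  have hKD : ∀ n, ∀ z ∈ D n, ((f z)⁻¹)^2 ≤ K n := by
    intro n z hz
    have h1 : 0 < μ n := hμpos n
    have h2 : μ n ≤ f z := hμ n z hz
    have h3 : (f z)⁻¹ ≤ (μ n)⁻¹ := inv_anti₀ h1 h2
    have h4 : ((f z)⁻¹)^2 ≤ ((μ n)⁻¹)^2 :=
      pow_le_pow_left₀ (inv_nonneg.2 (h1.trans_le h2).le) h3 2
    refine h4.trans ?_
    simp only [hKdef]
    exact Finset.le_sup' (fun j => ((μ j)⁻¹)^2) (Finset.self_mem_range_succ n)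
  -- the correction functions
  set bb : ℕ → X → ℝ :=
    fun j x => (K (j+1) - K j) * (j:ℝ) * (max (G x + (1 - (j:ℝ))) 0 - 1) with hbbdef
  set l : ℕ → X → ℝ := fun n x => ∑ j ∈ Finset.range n, bb j x with hldef
  set ψ : ℕ → X → ℝ := fun n x => K n * f x + l n x with hψdef
  have hbbconv : ∀ j, ConvexOn ℝ C (bb j) := by
    intro j
    have hc : 0 ≤ (K (j+1) - K j) * (j:ℝ) :=
      mul_nonneg (sub_nonneg.2 (hKmono (Nat.le_succ j))) (Nat.cast_nonneg j)
    have h1 : ConvexOn ℝ C (fun x => max (G x + (1 - (j:ℝ))) 0) :=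
      (hGconv.add (convexOn_const _ hCconv)).sup (convexOn_const _ hCconv)
    have h2 := (h1.smul hc).add (convexOn_const (-((K (j+1) - K j) * (j:ℝ))) hCconv)
    have heq : bb j = (fun x => ((K (j+1) - K j) * (j:ℝ)) • max (G x + (1 - (j:ℝ))) 0)
        + (fun _ => -((K (j+1) - K j) * (j:ℝ))) := by
      funext x
      simp only [hbbdef, Pi.add_apply, smul_eq_mul]
      ring
    rw [heq]
    exact h2
  have hlconv : ∀ n, ConvexOn ℝ C (l n) := by
    intro n
    induction n with
    | zero =>
        have heq : l 0 = fun _ => (0:ℝ) := by funext x; simp [hldef]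
        rw [heq]; exact convexOn_const _ hCconv
    | succ n ih =>
        have heq : l (n+1) = (fun x => l n x) + fun x => bb n x := by
          funext x; simp [hldef, Finset.sum_range_succ]
        rw [heq]; exact ih.add (hbbconv n)
  have hψconv : ∀ n, ConvexOn ℝ C (ψ n) := by
    intro n
    have h1 := (hfconv.smul (hKnn n)).add (hlconv n)
    have heq : ψ n = (fun x => K n • f x) + fun x => l n x := by
      funext x; simp [hψdef, smul_eq_mul]
    rw [heq]; exact h1
  have hlcont : ∀ n, ContinuousOn (l n) C := by
    intro n
    induction n with
    | zero =>
        have heq : l 0 = fun _ => (0:ℝ) := by funext x; simp [hldef]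
        rw [heq]; exact continuousOn_const
    | succ n ih =>
        have heq : l (n+1) = fun x => l n x + bb n x := by
          funext x; simp [hldef, Finset.sum_range_succ]
        rw [heq]
        apply ih.add
        exact (continuousOn_const.mul
          (((hGcont.add continuousOn_const).sup continuousOn_const).sub continuousOn_const))
  have hψcont : ∀ n, ContinuousOn (ψ n) C :=
    fun n => (continuousOn_const.mul hfcont).add (hlcont n)
  -- the step identities and inequalities
  have hψstep : ∀ (n : ℕ) (x : X), ψ (n+1) x - ψ n x = (K (n+1) - K n) * f x + bb n x := by
    intro n x
    simp only [hψdef, hldef, Finset.sum_range_succ]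
    ring
  have hup : ∀ n : ℕ, ∀ x ∈ C, (n:ℝ) < G x → ψ n x ≤ ψ (n+1) x := by
    intro n x hx hG
    have hstep := hψstep n x
    have hmax : max (G x + (1 - (n:ℝ))) 0 = G x + (1 - (n:ℝ)) := max_eq_left (by linarith)
    have hbb : bb n x = (K (n+1) - K n) * (n:ℝ) * (G x - (n:ℝ)) := by
      simp only [hbbdef, hmax]; ring
    have hΔ : 0 ≤ K (n+1) - K n := sub_nonneg.2 (hKmono (Nat.le_succ n))
    have hf1 := hfpos x hx
    have hp1 : 0 ≤ (K (n+1) - K n) * f x := mul_nonneg hΔ hf1.le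
    have hp2 : 0 ≤ (K (n+1) - K n) * (n:ℝ) * (G x - (n:ℝ)) :=
      mul_nonneg (mul_nonneg hΔ (Nat.cast_nonneg n)) (sub_pos.2 hG).le
    linarith
  have hdown : ∀ n : ℕ, ∀ x ∈ C, G x ≤ (n:ℝ) - 1 → ψ (n+1) x ≤ ψ n x := by
    intro n x hx hG
    have hstep := hψstep n x
    have hmax : max (G x + (1 - (n:ℝ))) 0 = 0 := max_eq_right (by linarith)
    have hbb : bb n x = -((K (n+1) - K n) * (n:ℝ)) := by
      simp only [hbbdef, hmax]; ring
    have hΔ : 0 ≤ K (n+1) - K n := sub_nonneg.2 (hKmono (Nat.le_succ n))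
    have hfn : f x ≤ (n:ℝ) := le_trans (le_trans (hfG x) hG) (by linarith)
    have hp1 : (K (n+1) - K n) * f x ≤ (K (n+1) - K n) * (n:ℝ) :=
      mul_le_mul_of_nonneg_left hfn hΔ
    linarith [hbb, hstep, hp1]
  set N : X → ℕ := fun x => ⌈G x⌉₊ with hNdef
  set q : X → ℝ := fun x => max (ψ (N x) x) (ψ (N x + 1) x) with hqdef
  have hchain_up : ∀ x ∈ C, ∀ m n : ℕ, m ≤ n → n ≤ N x → ψ m x ≤ ψ n x := by
    intro x hx m n hmn
    induction n, hmn using Nat.le_induction with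
    | base => intro _; exact le_rfl
    | succ n hmn ih =>
        intro hn
        have h1 : n < N x := lt_of_lt_of_le (Nat.lt_succ_self n) hn
        have hGn : (n:ℝ) < G x := by
          have := Nat.lt_ceil.1 (by simpa [hNdef] using h1)
          exact this
        exact le_trans (ih (le_of_lt h1)) (hup n x hx hGn)
  have hchain_down : ∀ x ∈ C, ∀ n : ℕ, N x + 1 ≤ n → ψ n x ≤ ψ (N x + 1) x := by
    intro x hx n hn
    induction n, hn using Nat.le_induction with
    | base => exact le_rfl
    | succ n hn ih =>
        have hG1 : G x ≤ (N x : ℝ) := by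
          simpa [hNdef] using Nat.le_ceil (G x)
        have hGn : G x ≤ (n:ℝ) - 1 := by
          have h2 : ((N x : ℕ) : ℝ) + 1 ≤ (n:ℝ) := by exact_mod_cast hn
          linarith
        exact le_trans (hdown n x hx hGn) ih
  have hqge : ∀ x ∈ C, ∀ n, ψ n x ≤ q x := by
    intro x hx n
    rcases le_or_gt n (N x) with h | h
    · exact le_trans (hchain_up x hx n (N x) h le_rfl) (le_max_left _ _)
    · exact le_trans (hchain_down x hx n h) (le_max_right _ _)
  have hqattain : ∀ x, ∃ n, q x = ψ n x ∧ K (N x) ≤ K n := by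
    intro x
    rcases max_cases (ψ (N x) x) (ψ (N x + 1) x) with ⟨h1, _⟩ | ⟨h1, _⟩
    · exact ⟨N x, h1, le_rfl⟩
    · exact ⟨N x + 1, h1, hKmono (Nat.le_succ _)⟩
  have hKNx : ∀ z ∈ C, ((f z)⁻¹)^2 ≤ K (N z) := by
    intro z hz
    apply hKD (N z) z
    refine ⟨hz, ?_⟩
    simpa [hNdef] using Nat.le_ceil (G z)
  -- convexity of q
  have hqconv : ConvexOn ℝ C q := by
    refine ⟨hCconv, fun x hx y hy va vb hva hvb hvab => ?_⟩
    have hzC : va • x + vb • y ∈ C := hCconv hx hy hva hvb hvab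
    obtain ⟨n, hn, -⟩ := hqattain (va • x + vb • y)
    have h1 : ψ n x ≤ q x := hqge x hx n
    have h2 : ψ n y ≤ q y := hqge y hy n
    have h3 := (hψconv n).2 hx hy hva hvb hvab
    simp only [smul_eq_mul] at h3 ⊢
    have h4 := mul_le_mul_of_nonneg_left h1 hva
    have h5 := mul_le_mul_of_nonneg_left h2 hvb
    calc q (va • x + vb • y) = ψ n (va • x + vb • y) := hn
      _ ≤ va * ψ n x + vb * ψ n y := h3
      _ ≤ va * q x + vb * q y := by linarith
  -- convexity of 1/f + q
  have hpconv : ConvexOn ℝ C (fun x => (f x)⁻¹ + q x) := by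
    refine ⟨hCconv, fun x hx y hy va vb hva hvb hvab => ?_⟩
    have hzC : va • x + vb • y ∈ C := hCconv hx hy hva hvb hvab
    obtain ⟨n, hn, hKn⟩ := hqattain (va • x + vb • y)
    have hKninv : ((f (va • x + vb • y))⁻¹)^2 ≤ K n :=
      le_trans (hKNx _ hzC) hKn
    have hfz := hfpos _ hzC
    have hfx := hfpos x hx
    have hfy := hfpos y hy
    have hzm : f (va • x + vb • y) ≤ va * f x + vb * f y := by
      simpa [smul_eq_mul] using hfconv.2 hx hy hva hvb hvab
    have hminv : (va * f x + vb * f y)⁻¹ ≤ va * (f x)⁻¹ + vb * (f y)⁻¹ :=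
      aux_inv_combo hfx hfy hva hvb hvab
    have hmpos : 0 < va * f x + vb * f y := lt_of_lt_of_le hfz hzm
    have hl : l n (va • x + vb • y) ≤ va * l n x + vb * l n y := by
      simpa [smul_eq_mul] using (hlconv n).2 hx hy hva hvb hvab
    have hexp1 : ψ n (va • x + vb • y) = K n * f (va • x + vb • y) + l n (va • x + vb • y) := by
      simp [hψdef]
    have hexp2 : va * ψ n x + vb * ψ n y
        = K n * (va * f x + vb * f y) + (va * l n x + vb * l n y) := by
      simp only [hψdef]; ring
    have hψgap : ψ n (va • x + vb • y)
        ≤ va * ψ n x + vb * ψ n y - K n * ((va * f x + vb * f y) - f (va • x + vb • y)) := by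
      rw [hexp1, hexp2]; ring_nf; linarith
    have h1 : ψ n x ≤ q x := hqge x hx n
    have h2 : ψ n y ≤ q y := hqge y hy n
    have hKgap : ((f (va • x + vb • y))⁻¹)^2 * ((va * f x + vb * f y) - f (va • x + vb • y))
        ≤ K n * ((va * f x + vb * f y) - f (va • x + vb • y)) :=
      mul_le_mul_of_nonneg_right hKninv (sub_nonneg.2 hzm)
    have hkey : (f (va • x + vb • y))⁻¹ - (va * f x + vb * f y)⁻¹
        ≤ ((f (va • x + vb • y))⁻¹)^2 * ((va * f x + vb * f y) - f (va • x + vb • y)) := by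
      set Z := f (va • x + vb • y) with hZ
      set m := va * f x + vb * f y with hm
      have e1 : Z⁻¹ - m⁻¹ = (m - Z) / (m * Z) := by
        field_simp
      have e2 : (Z⁻¹)^2 * (m - Z) = (m - Z) / Z^2 := by
        field_simp
      rw [e1, e2]
      have hZ2 : (0:ℝ) < Z^2 := by positivity
      have hmZ : Z^2 ≤ m * Z := by nlinarith
      have hnum : 0 ≤ m - Z := sub_nonneg.2 hzm
      gcongr
    have h4 := mul_le_mul_of_nonneg_left h1 hva
    have h5 := mul_le_mul_of_nonneg_left h2 hvb
    simp only [smul_eq_mul]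
    calc (f (va • x + vb • y))⁻¹ + q (va • x + vb • y)
        = (f (va • x + vb • y))⁻¹ + ψ n (va • x + vb • y) := by rw [hn]
      _ ≤ va * ((f x)⁻¹ + q x) + vb * ((f y)⁻¹ + q y) := by linarith [hψgap, hKgap, hkey, hminv, h4, h5]
  -- continuity of q
  have hQcont : ∀ M : ℕ, ContinuousOn (fun x => (Finset.range (M+1)).sup'
      (Finset.nonempty_range_iff.2 (Nat.succ_ne_zero M)) (fun n => ψ n x)) C := by
    intro M
    induction M with
    | zero =>
        have heq : (fun x => (Finset.range 1).sup'
            (Finset.nonempty_range_iff.2 (Nat.succ_ne_zero 0)) (fun n => ψ n x))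
            = fun x => ψ 0 x := by
          funext x
          simp [Finset.range_one]
        rw [heq]; exact hψcont 0
    | succ M ih =>
        have heq : (fun x => (Finset.range (M+2)).sup'
            (Finset.nonempty_range_iff.2 (Nat.succ_ne_zero (M+1))) (fun n => ψ n x))
            = fun x => max ((Finset.range (M+1)).sup'
              (Finset.nonempty_range_iff.2 (Nat.succ_ne_zero M)) (fun n => ψ n x)) (ψ (M+1) x) := by
          funext x
          apply le_antisymm
          · apply Finset.sup'_le
            intro n hn
            rcases Nat.lt_succ_iff_lt_or_eq.1 (Finset.mem_range.1 hn) with h | h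
            · exact le_trans (Finset.le_sup' (fun n => ψ n x) (Finset.mem_range.2 h))
                (le_max_left _ _)
            · subst h; exact le_max_right _ _
          · apply max_le
            · exact Finset.sup'_mono (fun n => ψ n x)
                (Finset.range_subset_range.2 (Nat.le_succ _))
                (Finset.nonempty_range_iff.2 (Nat.succ_ne_zero M))
            · exact Finset.le_sup' (fun n => ψ n x) (Finset.self_mem_range_succ (M+1))
        rw [heq]
        exact ih.sup (hψcont (M+1))
  have hqcont : ContinuousOn q C := by
    intro x₀ hx₀
    apply ContinuousAt.continuousWithinAt
    set M : ℕ := N x₀ + 1 with hMdef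
    have hU : IsOpen (C ∩ G ⁻¹' Iio ((M:ℝ))) := hGcont.isOpen_inter_preimage hCopen isOpen_Iio
    have hx₀U : x₀ ∈ C ∩ G ⁻¹' Iio ((M:ℝ)) := by
      refine ⟨hx₀, ?_⟩
      simp only [mem_preimage, mem_Iio, hMdef]
      have h1 : G x₀ ≤ (N x₀ : ℝ) := by simpa [hNdef] using Nat.le_ceil (G x₀)
      have h2 : (N x₀ : ℝ) < (N x₀ : ℝ) + 1 := by linarith
      calc G x₀ ≤ (N x₀ : ℝ) := h1
        _ < ((N x₀ + 1 : ℕ) : ℝ) := by push_cast; linarith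
    have heqU : ∀ x ∈ C ∩ G ⁻¹' Iio ((M:ℝ)), q x = (Finset.range (M+2)).sup'
        (Finset.nonempty_range_iff.2 (Nat.succ_ne_zero (M+1))) (fun n => ψ n x) := by
      intro x hxU
      have hxC : x ∈ C := hxU.1
      have hNxM : N x ≤ M := by
        have hlt : G x < (M:ℝ) := hxU.2
        simpa [hNdef] using Nat.ceil_le.2 hlt.le
      apply le_antisymm
      · apply max_le
        · exact Finset.le_sup' (fun n => ψ n x) (Finset.mem_range.2 (by omega))
        · exact Finset.le_sup' (fun n => ψ n x) (Finset.mem_range.2 (by omega))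
      · exact Finset.sup'_le _ _ (fun n _ => hqge x hxC n)
    have hcontQ : ContinuousAt (fun x => (Finset.range (M+2)).sup'
        (Finset.nonempty_range_iff.2 (Nat.succ_ne_zero (M+1))) (fun n => ψ n x)) x₀ :=
      (hQcont (M+1)).continuousAt (hCopen.mem_nhds hx₀)
    apply hcontQ.congr
    exact Filter.eventuallyEq_of_mem (hU.mem_nhds hx₀U) (fun x hx => (heqU x hx).symm)
  -- assemble the decomposition
  refine ⟨fun x => 1 / f x + q x, q, ?_, hqcont, ?_, hqconv, fun x hx => by ring⟩
  · exact (continuousOn_const.div hfcont (fun x hx => (hfpos x hx).ne')).add hqcont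
  · have heq : (fun x => 1 / f x + q x) = fun x => (f x)⁻¹ + q x := by
      funext x; rw [one_div]
    rw [heq]
    exact hpconv
end

section
/- Let X, Y, Z be real normed linear spaces, A ⊆ X and B ⊆ Y convex sets, F : A → B a d.c. mapping with control function f : A → ℝ, and G : B → Z a d.c. mapping with control function g : B → ℝ. If G is Lipschitz on B with constant L_G and g is Lipschitz on B with constant L_g, then G ∘ F is d.c. on A with control function h = g ∘ F + (L_G + L_g) f. -/
open Set Metric Bornology Filter NNReal

private lemma norm_le_of_forall_dual_le {Y : Type*} [NormedAddCommGroup Y] [NormedSpace ℝ Y]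
    (v : Y) (D : ℝ) (h : ∀ φ : Y →L[ℝ] ℝ, ‖φ‖ ≤ 1 → φ v ≤ D) : ‖v‖ ≤ D := by
  rcases eq_or_ne v 0 with rfl | hv
  · simpa using h 0 (by simp)
  · obtain ⟨g, hg1, hgv⟩ := exists_dual_vector ℝ v (norm_ne_zero_iff.mpr hv)
    have := h g (le_of_eq hg1)
    rw [hgv] at this
    simpa using this

/-- Composition of d.c. mappings, where the outer mapping and its control
function are Lipschitz, is d.c. with control function `g ∘ F + (L_G + L_g) f`. -/
theorem dc_comp_lipschitz_control {X Y Z : Type*}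
    [NormedAddCommGroup X] [NormedSpace ℝ X]
    [NormedAddCommGroup Y] [NormedSpace ℝ Y]
    [NormedAddCommGroup Z] [NormedSpace ℝ Z]
    (A : Set X) (hAconv : Convex ℝ A) (B : Set Y) (hBconv : Convex ℝ B)
    (F : X → Y) (hFmaps : Set.MapsTo F A B) (hFcont : ContinuousOn F A)
    (f : X → ℝ) (hf : IsControlOn A F f)
    (G : Y → Z) (hGcont : ContinuousOn G B)
    (g : Y → ℝ) (hg : IsControlOn B G g)
    (LG Lg : NNReal) (hGLip : LipschitzOnWith LG G B) (hgLip : LipschitzOnWith Lg g B) :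
    ContinuousOn (G ∘ F) A ∧
      IsControlOn A (G ∘ F) (fun x => g (F x) + ((LG : ℝ) + (Lg : ℝ)) * f x) := by

  have hGFcont : ContinuousOn (G ∘ F) A := hGcont.comp hFcont hFmaps
  set L : ℝ := (LG : ℝ) + (Lg : ℝ) with hLdef
  have hL0 : (0:ℝ) ≤ L := by positivity
  refine ⟨hGFcont, (hg.1.comp hFcont hFmaps).add (continuousOn_const.mul hf.1), ?_⟩
  intro φ hφ
  refine ⟨hAconv, ?_⟩
  intro x1 hx1 x2 hx2 a b ha hb hab
  set x := a • x1 + b • x2 with hxdef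
  have hxA : x ∈ A := hAconv hx1 hx2 ha hb hab
  set y := a • F x1 + b • F x2 with hydef
  have hyB : y ∈ B := hBconv (hFmaps hx1) (hFmaps hx2) ha hb hab
  have hFxB : F x ∈ B := hFmaps hxA
  set D : ℝ := a * f x1 + b * f x2 - f x with hDdef
  have hvD : ‖F x - y‖ ≤ D := by
    apply norm_le_of_forall_dual_le
    intro ψ hψ
    have hconv := (hf.2 ψ hψ).2 hx1 hx2 ha hb hab
    simp only [smul_eq_mul, ← hxdef] at hconv
    have : ψ (F x - y) = ψ (F x) - (a * ψ (F x1) + b * ψ (F x2)) := by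
      simp [hydef, map_sub, map_add, map_smul, smul_eq_mul]
    rw [this, hDdef]
    linarith [hconv]
  -- convexity of k := φ ∘ G + g on B
  have hk := (hg.2 φ hφ).2 (hFmaps hx1) (hFmaps hx2) ha hb hab
  simp only [smul_eq_mul, ← hydef] at hk
  -- Lipschitz step
  have hG : φ (G (F x)) - φ (G y) ≤ (LG : ℝ) * ‖F x - y‖ := by
    have h1 : φ (G (F x)) - φ (G y) ≤ ‖G (F x) - G y‖ := by
      calc φ (G (F x)) - φ (G y) = φ (G (F x) - G y) := by rw [map_sub]
      _ ≤ ‖φ (G (F x) - G y)‖ := le_abs_self _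
      _ ≤ ‖φ‖ * ‖G (F x) - G y‖ := φ.le_opNorm _
      _ ≤ 1 * ‖G (F x) - G y‖ := by
          exact mul_le_mul_of_nonneg_right hφ (norm_nonneg _)
      _ = ‖G (F x) - G y‖ := one_mul _
    have h2 : ‖G (F x) - G y‖ ≤ (LG : ℝ) * ‖F x - y‖ := by
      have := hGLip.dist_le_mul _ hFxB _ hyB
      simpa [dist_eq_norm] using this
    linarith
  have hgstep : g (F x) - g y ≤ (Lg : ℝ) * ‖F x - y‖ := by
    have := hgLip.dist_le_mul _ hFxB _ hyB
    rw [dist_eq_norm, dist_eq_norm] at this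
    calc g (F x) - g y ≤ |g (F x) - g y| := le_abs_self _
    _ ≤ (Lg : ℝ) * ‖F x - y‖ := this
  have hLD : L * ‖F x - y‖ ≤ L * D := mul_le_mul_of_nonneg_left hvD hL0
  have hnn : (0:ℝ) ≤ ‖F x - y‖ := norm_nonneg _
  have hLG0 : (0:ℝ) ≤ (LG:ℝ) := LG.coe_nonneg
  have hLg0 : (0:ℝ) ≤ (Lg:ℝ) := Lg.coe_nonneg
  simp only [Function.comp, smul_eq_mul, ← hxdef]
  have hexp : L * ‖F x - y‖ = (LG:ℝ) * ‖F x - y‖ + (Lg:ℝ) * ‖F x - y‖ := by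
    rw [hLdef]; ring
  nlinarith [hk, hG, hgstep, hLD]
end

section
/- Let X, Y be real normed linear spaces, C ⊆ X a bounded open convex set, and F : C → Y a d.c. mapping admitting a Lipschitz control function. Then F is Lipschitz on C. -/
open Set Metric Bornology Filter NNReal

private lemma exists_subgradient' {X : Type*} [NormedAddCommGroup X] [NormedSpace ℝ X]
    {C : Set X} (hCopen : IsOpen C) {g : X → ℝ}
    (hg : ConvexOn ℝ C g) (hgc : ContinuousOn g C) {x : X} (hx : x ∈ C) :
    ∃ d : X →L[ℝ] ℝ, ∀ z ∈ C, d (z - x) ≤ g z - g x := by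
  set E : Set (X × ℝ) := {p | p.1 ∈ C ∧ g p.1 < p.2} with hE
  have hEopen : IsOpen E := by
    have hcont : ContinuousOn (fun p : X × ℝ => g p.1 - p.2) (C ×ˢ (univ : Set ℝ)) := by
      apply ContinuousOn.sub
      · exact hgc.comp continuous_fst.continuousOn (fun p hp => hp.1)
      · exact continuous_snd.continuousOn
    have h2 := hcont.isOpen_inter_preimage (hCopen.prod isOpen_univ) (isOpen_Iio (a := (0:ℝ)))
    convert h2 using 1
    ext p
    simp only [hE, mem_setOf_eq, mem_inter_iff, mem_prod, mem_univ, and_true, mem_preimage,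
      mem_Iio, sub_neg]
  have hEconv : Convex ℝ E := by
    rintro p ⟨hp1, hp2⟩ q ⟨hq1, hq2⟩ s t hs ht hst
    refine ⟨hg.1 hp1 hq1 hs ht hst, ?_⟩
    have hle : g (s • p + t • q).1 ≤ s * g p.1 + t * g q.1 := hg.2 hp1 hq1 hs ht hst
    have h2 : (s • p + t • q).2 = s * p.2 + t * q.2 := rfl
    rcases eq_or_lt_of_le hs with hs0 | hs0
    · have ht1 : t = 1 := by linarith
      have : s * g p.1 + t * g q.1 < s * p.2 + t * q.2 := by
        rw [← hs0, ht1]; simpa using hq2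
      rw [h2]; exact lt_of_le_of_lt hle this
    · have : s * g p.1 + t * g q.1 < s * p.2 + t * q.2 := by
        have h3 : s * g p.1 < s * p.2 := by exact (mul_lt_mul_iff_right₀ hs0).2 hp2
        have h4 : t * g q.1 ≤ t * q.2 := mul_le_mul_of_nonneg_left hq2.le ht
        linarith
      rw [h2]; exact lt_of_le_of_lt hle this
  have hxE : ((x, g x) : X × ℝ) ∉ E := fun hmem => lt_irrefl _ hmem.2
  obtain ⟨Φ, hΦ⟩ := geometric_hahn_banach_open_point hEconv hEopen hxE
  set α : ℝ := Φ (0, 1) with hα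
  have e1 : ∀ (w : X) (t : ℝ), Φ (w, t) = Φ (w, 0) + t * α := by
    intro w t
    have : ((w, t) : X × ℝ) = (w, (0:ℝ)) + t • ((0:X), (1:ℝ)) := by
      simp [Prod.ext_iff]
    rw [this, map_add, map_smul, smul_eq_mul, hα]
  have key : ∀ z ∈ C, ∀ s : ℝ, 0 < s → Φ (z, 0) + (g z + s) * α < Φ (x, 0) + g x * α := by
    intro z hz s hs
    have h1 : ((z, g z + s) : X × ℝ) ∈ E := ⟨hz, by show g z < g z + s; linarith⟩
    have h2 := hΦ _ h1
    rwa [e1 z (g z + s), e1 x (g x)] at h2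
  have hαneg : α < 0 := by
    have h1 := key x hx 1 one_pos
    nlinarith
  have key2 : ∀ z ∈ C, Φ (z, 0) + g z * α ≤ Φ (x, 0) + g x * α := by
    intro z hz
    by_contra hcon
    push_neg at hcon
    set c : ℝ := (Φ (z, 0) + g z * α) - (Φ (x, 0) + g x * α) with hc
    have hcpos : 0 < c := by simp only [hc]; linarith
    have hspos : 0 < c / (2 * (-α)) := div_pos hcpos (by linarith)
    have h1 := key z hz (c / (2 * (-α))) hspos
    have hα0 : α ≠ 0 := ne_of_lt hαneg
    have h2 : (c / (2 * (-α))) * α = -(c / 2) := by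
      field_simp
    nlinarith
  refine ⟨(-α)⁻¹ • (Φ.comp (ContinuousLinearMap.inl ℝ X ℝ)), ?_⟩
  intro z hz
  have hz2 := key2 z hz
  have hαpos : 0 < -α := by linarith
  have hval : ((-α)⁻¹ • (Φ.comp (ContinuousLinearMap.inl ℝ X ℝ))) (z - x)
      = (-α)⁻¹ * (Φ (z, 0) - Φ (x, 0)) := by
    simp only [ContinuousLinearMap.smul_apply, ContinuousLinearMap.comp_apply,
      ContinuousLinearMap.inl_apply, smul_eq_mul]
    congr 1
    have : ((z - x, (0:ℝ)) : X × ℝ) = (z, (0:ℝ)) - (x, (0:ℝ)) := by simp [Prod.ext_iff]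
    rw [this, map_sub]
  rw [hval]
  rw [inv_mul_le_iff₀ hαpos]
  nlinarith

set_option maxHeartbeats 1000000 in
/-- A d.c. mapping on a bounded open convex set admitting a Lipschitz
control function is Lipschitz. -/
theorem dc_lipschitz_of_lipschitz_control {X Y : Type*}
    [NormedAddCommGroup X] [NormedSpace ℝ X]
    [NormedAddCommGroup Y] [NormedSpace ℝ Y]
    (C : Set X) (hCbdd : IsBounded C) (hCopen : IsOpen C) (hCconv : Convex ℝ C)
    (F : X → Y) (hFcont : ContinuousOn F C)
    (f : X → ℝ) (hf : IsControlOn C F f)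
    (L : NNReal) (hfLip : LipschitzOnWith L f C) :
    ∃ K : NNReal, LipschitzOnWith K F C := by
  obtain ⟨hfc, hfctrl⟩ := hf
  rcases C.eq_empty_or_nonempty with rfl | ⟨a, ha⟩
  · exact ⟨1, by intro x hx; exact absurd hx (Set.notMem_empty x)⟩
  have hL0 : (0:ℝ) ≤ L := L.coe_nonneg
  -- choose a radius ρ around a with closedBall a ρ ⊆ C and F close to F a there
  obtain ⟨ε₁, hε₁pos, hball₁⟩ := Metric.isOpen_iff.1 hCopen a ha
  have hFa : ContinuousAt F a := (hFcont a ha).continuousAt (hCopen.mem_nhds ha)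
  obtain ⟨ε₂, hε₂pos, hFnear⟩ := Metric.continuousAt_iff.1 hFa 1 one_pos
  obtain ⟨ρ, hρeq⟩ : ∃ v : ℝ, v = min ε₁ ε₂ / 2 := ⟨_, rfl⟩
  have hmin : 0 < min ε₁ ε₂ := lt_min hε₁pos hε₂pos
  have hρpos : 0 < ρ := by rw [hρeq]; positivity
  have hρε₁ : ρ < ε₁ := by
    have := min_le_left ε₁ ε₂; rw [hρeq]; linarith
  have hρε₂ : ρ < ε₂ := by
    have := min_le_right ε₁ ε₂; rw [hρeq]; linarith
  have hballC : closedBall a ρ ⊆ C := fun w hw => hball₁ (by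
    rw [mem_closedBall] at hw; rw [mem_ball]; linarith)
  have haC : a ∈ closedBall a ρ := mem_closedBall_self hρpos.le
  have hFball : ∀ w ∈ closedBall a ρ, ‖F w - F a‖ ≤ 1 := by
    intro w hw
    rw [mem_closedBall] at hw
    have h1 : dist (F w) (F a) < 1 := hFnear (by linarith)
    rw [dist_eq_norm] at h1; linarith
  -- outer radius
  obtain ⟨R₀, hR₀⟩ := hCbdd.subset_closedBall a
  obtain ⟨R, hReq⟩ : ∃ v : ℝ, v = max R₀ ρ := ⟨_, rfl⟩
  have hRρ : ρ ≤ R := by rw [hReq]; exact le_max_right _ _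
  have hRpos : 0 < R := lt_of_lt_of_le hρpos hRρ
  have hRC : ∀ z ∈ C, ‖z - a‖ ≤ R := by
    intro z hz
    have h1 := hR₀ hz
    rw [mem_closedBall, dist_eq_norm] at h1
    rw [hReq]
    exact le_trans h1 (le_max_left _ _)
  -- Lipschitz bound for f in norm form
  have hLip' : ∀ u ∈ C, ∀ v ∈ C, |f u - f v| ≤ L * ‖u - v‖ := by
    intro u hu v hv
    have h1 := lipschitzOnWith_iff_dist_le_mul.1 hfLip u hu v hv
    rwa [Real.dist_eq, dist_eq_norm] at h1
  -- constants
  obtain ⟨M₁, hM₁eq⟩ : ∃ v : ℝ, v = ‖F a‖ + 1 + |f a| + L * R := ⟨_, rfl⟩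
  have hM₁pos : 0 < M₁ := by
    rw [hM₁eq]
    nlinarith [norm_nonneg (F a), abs_nonneg (f a), mul_nonneg hL0 hRpos.le]
  obtain ⟨M₂, hM₂eq⟩ : ∃ v : ℝ, v = 4 * M₁ * (R + ρ) / ρ := ⟨_, rfl⟩
  have hM₂nonneg : 0 ≤ M₂ := by
    rw [hM₂eq]
    apply div_nonneg _ hρpos.le
    nlinarith
  have hM₁M₂ : M₁ ≤ M₂ := by
    rw [hM₂eq, le_div_iff₀ hρpos]
    nlinarith
  obtain ⟨M₃, hM₃eq⟩ : ∃ v : ℝ, v = M₁ + M₂ := ⟨_, rfl⟩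
  have hM₃nonneg : 0 ≤ M₃ := by rw [hM₃eq]; linarith
  -- bound on the ball for controlled functions
  have hballbd : ∀ ψ : Y →L[ℝ] ℝ, ‖ψ‖ ≤ 1 → ∀ w ∈ closedBall a ρ,
      |ψ (F w) + f w| ≤ M₁ := by
    intro ψ hψ w hw
    have hwC : w ∈ C := hballC hw
    have h1 : ‖F w‖ ≤ ‖F a‖ + 1 := by
      have h2 := hFball w hw
      have h3 := norm_sub_norm_le (F w) (F a)
      linarith
    have hwa : ‖w - a‖ ≤ ρ := by rw [mem_closedBall, dist_eq_norm] at hw; exact hw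
    have h4 : |f w - f a| ≤ L * R := by
      have h5 := hLip' w hwC a ha
      have h6 : (L:ℝ) * ‖w - a‖ ≤ L * R := by
        apply mul_le_mul_of_nonneg_left _ hL0; linarith
      linarith
    have h7 : |f w| ≤ |f a| + L * R := by
      have := abs_add_le (f a) (f w - f a)
      simp only [add_sub_cancel] at this
      linarith
    have h8 : |ψ (F w)| ≤ ‖F w‖ := by
      have h9 := ψ.le_opNorm (F w)
      rw [Real.norm_eq_abs] at h9
      nlinarith [norm_nonneg (F w), abs_nonneg (ψ (F w))]
    calc |ψ (F w) + f w| ≤ |ψ (F w)| + |f w| := abs_add_le _ _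
      _ ≤ M₁ := by rw [hM₁eq]; linarith
  -- lower bound on all of C for controlled functions
  have hlower : ∀ ψ : Y →L[ℝ] ℝ, ‖ψ‖ ≤ 1 → ∀ x ∈ C, -M₂ ≤ ψ (F x) + f x := by
    intro ψ hψ x hx
    by_cases hxa : x = a
    · subst hxa
      have h1 := abs_le.1 (hballbd ψ hψ x haC)
      linarith
    · have hn0' : (0:ℝ) < ‖a - x‖ := by
        rw [norm_pos_iff, sub_ne_zero]; exact fun h => hxa h.symm
      obtain ⟨n, hneq⟩ : ∃ v : ℝ, v = ‖a - x‖ := ⟨_, rfl⟩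
      have hn0 : (0:ℝ) < n := by rw [hneq]; exact hn0'
      obtain ⟨b, hbeq⟩ : ∃ v : X, v = a + (ρ / 2 / n) • (a - x) := ⟨_, rfl⟩
      have hbball : b ∈ closedBall a ρ := by
        rw [mem_closedBall, dist_eq_norm, hbeq]
        have he : a + (ρ / 2 / n) • (a - x) - a = (ρ / 2 / n) • (a - x) := by abel
        rw [he, norm_smul, Real.norm_eq_abs,
          abs_of_pos (div_pos (by linarith : (0:ℝ) < ρ / 2) hn0), ← hneq,
          div_mul_cancel₀ _ (ne_of_gt hn0)]
        linarith
      have hbC : b ∈ C := hballC hbball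
      obtain ⟨θ, hθeq⟩ : ∃ v : ℝ, v = n / (n + ρ / 2) := ⟨_, rfl⟩
      have hdpos : (0:ℝ) < n + ρ / 2 := by linarith
      have hθ0 : (0:ℝ) ≤ θ := by rw [hθeq]; exact (div_pos hn0 hdpos).le
      have hθ1 : θ ≤ 1 := by
        rw [hθeq, div_le_one hdpos]; linarith
      have h1θ0 : (0:ℝ) ≤ 1 - θ := by linarith
      have hkey : θ * (ρ / 2 / n) = 1 - θ := by
        rw [hθeq]
        field_simp
        ring
      have hcomb : θ • b + (1 - θ) • x = a := by
        rw [hbeq, smul_add, smul_smul, hkey]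
        module
      have hconv := (hfctrl ψ hψ).2 hbC hx hθ0 h1θ0 (by ring)
      rw [hcomb] at hconv
      simp only [smul_eq_mul] at hconv
      -- hconv : ψ (F a) + f a ≤ θ * (ψ (F b) + f b) + (1 - θ) * (ψ (F x) + f x)
      have hga := abs_le.1 (hballbd ψ hψ a haC)
      have hgb := abs_le.1 (hballbd ψ hψ b hbball)
      have hθgb : θ * (ψ (F b) + f b) ≤ M₁ := by
        have h2 : θ * (ψ (F b) + f b) ≤ θ * M₁ := mul_le_mul_of_nonneg_left hgb.2 hθ0
        nlinarith [mul_nonneg h1θ0 hM₁pos.le]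
      have hmain : -(2 * M₁) ≤ (1 - θ) * (ψ (F x) + f x) := by linarith
      have h1θeq : 1 - θ = (ρ / 2) / (n + ρ / 2) := by
        rw [hθeq]
        field_simp
        ring
      have hnR : n ≤ R := by
        rw [hneq, ← norm_neg]; simp only [neg_sub]; exact hRC x hx
      have hcoeff : (0:ℝ) < ρ / (2 * (R + ρ)) := div_pos hρpos (by linarith)
      have h1θge : ρ / (2 * (R + ρ)) ≤ 1 - θ := by
        rw [h1θeq, div_le_div_iff₀ (by linarith) hdpos]
        nlinarith
      by_contra hcon
      push_neg at hcon
      have hgx0 : ψ (F x) + f x ≤ 0 := by linarith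
      have e1 : (1 - θ) * (ψ (F x) + f x) ≤ (ρ / (2 * (R + ρ))) * (ψ (F x) + f x) :=
        mul_le_mul_of_nonpos_right h1θge hgx0
      have e2 : (ρ / (2 * (R + ρ))) * (ψ (F x) + f x) < (ρ / (2 * (R + ρ))) * (-M₂) :=
        mul_lt_mul_of_pos_left hcon hcoeff
      have e3 : (ρ / (2 * (R + ρ))) * (-M₂) = -(2 * M₁) := by
        rw [hM₂eq]
        field_simp
        ring
      linarith
  -- the Lipschitz constant
  obtain ⟨Kr, hKreq⟩ : ∃ v : ℝ, v = L + 2 / ρ * (2 * M₃ + 2 * L * R) := ⟨_, rfl⟩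
  have hKr0 : 0 ≤ Kr := by
    rw [hKreq]
    have h1 : (0:ℝ) ≤ 2 * M₃ + 2 * L * R := by nlinarith [mul_nonneg hL0 hRpos.le]
    have h2 : (0:ℝ) ≤ 2 / ρ := (div_pos two_pos hρpos).le
    nlinarith
  refine ⟨Kr.toNNReal, lipschitzOnWith_iff_dist_le_mul.2 ?_⟩
  intro x hx y hy
  rw [Real.coe_toNNReal Kr hKr0, dist_eq_norm, dist_eq_norm]
  by_cases hFxy : F x = F y
  · rw [hFxy, sub_self, norm_zero]
    exact mul_nonneg hKr0 (norm_nonneg _)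
  have hvne : F x - F y ≠ 0 := sub_ne_zero.2 hFxy
  have hxyne : x ≠ y := fun e => hFxy (by rw [e])
  have hδpos : (0:ℝ) < ‖x - y‖ := by rw [norm_pos_iff, sub_ne_zero]; exact hxyne
  obtain ⟨φ, hφ1, hφv⟩ := exists_dual_vector ℝ (F x - F y) (norm_ne_zero_iff.2 hvne)
  have hφv' : φ (F x) - φ (F y) = ‖F x - F y‖ := by
    rw [← map_sub]; exact_mod_cast hφv
  have hφle : ‖φ‖ ≤ 1 := le_of_eq hφ1
  have hφle' : ‖-φ‖ ≤ 1 := by rw [norm_neg]; exact hφle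
  have hgcont : ContinuousOn (fun z => φ (F z) + f z) C :=
    (φ.continuous.comp_continuousOn hFcont).add hfc
  have hhcont : ContinuousOn (fun z => (-φ) (F z) + f z) C :=
    ((-φ).continuous.comp_continuousOn hFcont).add hfc
  obtain ⟨dg, hdg⟩ := exists_subgradient' hCopen (hfctrl φ hφle) hgcont hx
  obtain ⟨dh, hdh⟩ := exists_subgradient' hCopen (hfctrl (-φ) hφle') hhcont hx
  -- the sum dg + dh is a subgradient of 2f at x, bounded using Lipschitzness of f
  obtain ⟨r, hrpos, hrball⟩ := Metric.isOpen_iff.1 hCopen x hx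
  have hsum : dg (x - a) + dh (x - a) ≤ 2 * L * R := by
    by_cases hxa : x = a
    · subst hxa
      simp only [sub_self, map_zero, add_zero]
      nlinarith [mul_nonneg hL0 hRpos.le]
    · have hna : (0:ℝ) < ‖x - a‖ := by
        rw [norm_pos_iff, sub_ne_zero]; exact hxa
      obtain ⟨t, hteq⟩ : ∃ v : ℝ, v = r / (2 * ‖x - a‖) := ⟨_, rfl⟩
      have htpos : (0:ℝ) < t := by
        rw [hteq]; exact div_pos hrpos (by linarith)
      obtain ⟨z, hzeq⟩ : ∃ v : X, v = x + t • (x - a) := ⟨_, rfl⟩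
      have hzx : z - x = t • (x - a) := by rw [hzeq]; abel
      have hzxn : ‖z - x‖ = r / 2 := by
        rw [hzx, norm_smul, Real.norm_eq_abs, abs_of_pos htpos, hteq]
        field_simp
      have hzC : z ∈ C := hrball (by
        rw [mem_ball, dist_eq_norm, hzxn]; linarith)
      have h1 := hdg z hzC
      have h2 := hdh z hzC
      try simp only [] at h1 h2
      rw [hzx, map_smul, smul_eq_mul] at h1 h2
      have h3 : |f z - f x| ≤ L * (r / 2) := by
        have h := hLip' z hzC x hx
        rwa [hzxn] at h
      have hφneg : ∀ u : Y, (-φ) u = -(φ u) := fun u => rfl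
      rw [hφneg, hφneg] at h2
      have h4 : t * dg (x - a) + t * dh (x - a) ≤ 2 * ((L:ℝ) * (r / 2)) := by
        have h5 := abs_le.1 h3
        linarith
      have hr2 : r = 2 * t * ‖x - a‖ := by
        rw [hteq]; field_simp
      have h6 : t * (dg (x - a) + dh (x - a)) ≤ t * (2 * L * ‖x - a‖) := by
        calc t * (dg (x - a) + dh (x - a)) = t * dg (x - a) + t * dh (x - a) := by ring
          _ ≤ (L:ℝ) * r := by linarith
          _ = t * (2 * L * ‖x - a‖) := by rw [hr2]; ring
      have h7 : dg (x - a) + dh (x - a) ≤ 2 * L * ‖x - a‖ :=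
        le_of_mul_le_mul_left h6 htpos
      have h8 : (2:ℝ) * L * ‖x - a‖ ≤ 2 * L * R := by
        have := hRC x hx
        nlinarith
      linarith
  -- dh (a - x) ≤ M₃
  have hdhax : dh (a - x) ≤ M₃ := by
    have h1 := hdh a (hballC haC)
    try simp only [] at h1
    have h2 : (-φ) (F a) + f a ≤ M₁ := (abs_le.1 (hballbd (-φ) hφle' a haC)).2
    have h3 : -M₂ ≤ (-φ) (F x) + f x := hlower (-φ) hφle' x hx
    rw [hM₃eq]; linarith
  -- lower bound for dg (a - x)
  have hdgax : -(M₃ + 2 * L * R) ≤ dg (a - x) := by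
    have e : dg (a - x) = -dg (x - a) := by
      rw [show a - x = -(x - a) from (neg_sub _ _).symm, map_neg]
    have e2 : dh (x - a) = -dh (a - x) := by
      rw [show x - a = -(a - x) from (neg_sub _ _).symm, map_neg]
    rw [e]
    have h1 : dg (x - a) ≤ M₃ + 2 * L * R := by
      rw [e2] at hsum; linarith
    linarith
  -- directional bound for dg (x - y)
  obtain ⟨c, hceq⟩ : ∃ v : ℝ, v = ρ / (2 * ‖x - y‖) := ⟨_, rfl⟩
  have hcpos : (0:ℝ) < c := by
    rw [hceq]; exact div_pos hρpos (by linarith)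
  obtain ⟨w, hweq⟩ : ∃ v : X, v = a + c • (x - y) := ⟨_, rfl⟩
  have hwball : w ∈ closedBall a ρ := by
    rw [mem_closedBall, dist_eq_norm, hweq]
    have he : a + c • (x - y) - a = c • (x - y) := by abel
    rw [he, norm_smul, Real.norm_eq_abs, abs_of_pos hcpos, hceq]
    rw [div_mul_eq_mul_div, div_le_iff₀ (by linarith)]
    nlinarith [mul_pos hρpos hδpos]
  have hwC : w ∈ C := hballC hwball
  have hkey := hdg w hwC
  try simp only [] at hkey
  have hgw : φ (F w) + f w ≤ M₁ := (abs_le.1 (hballbd φ hφle w hwball)).2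
  have hgx : -M₂ ≤ φ (F x) + f x := hlower φ hφle x hx
  have hwx : w - x = (a - x) + c • (x - y) := by rw [hweq]; abel
  rw [hwx, map_add, map_smul, smul_eq_mul] at hkey
  have hkey2 : c * dg (x - y) ≤ 2 * M₃ + 2 * L * R := by
    have h1 : dg (a - x) + c * dg (x - y) ≤ M₃ := by rw [hM₃eq]; linarith
    linarith
  have hdgxy : dg (x - y) ≤ 2 * ‖x - y‖ / ρ * (2 * M₃ + 2 * L * R) := by
    have h1 : dg (x - y) ≤ (2 * M₃ + 2 * L * R) / c := by
      rw [le_div_iff₀ hcpos, mul_comm]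
      exact hkey2
    have h2 : (2 * M₃ + 2 * L * R) / c = 2 * ‖x - y‖ / ρ * (2 * M₃ + 2 * L * R) := by
      rw [hceq]
      field_simp
    linarith [h2 ▸ h1]
  -- conclude
  have h1 := hdg y hy
  try simp only [] at h1
  have e2 : dg (y - x) = -dg (x - y) := by
    rw [show y - x = -(x - y) from (neg_sub _ _).symm, map_neg]
  rw [e2] at h1
  have h2 := abs_le.1 (hLip' x hx y hy)
  have h3 : ‖F x - F y‖ ≤ dg (x - y) + L * ‖x - y‖ := by
    rw [← hφv']
    linarith
  have h4 : Kr * ‖x - y‖ = 2 * ‖x - y‖ / ρ * (2 * M₃ + 2 * L * R) + L * ‖x - y‖ := by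
    rw [hKreq]
    field_simp
    ring
  rw [h4]
  linarith
end
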